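/- arXiv:cs/0701123 — 4 statements merged into one kernel-verified Lean document; each statement's English description precedes it below -/
import Mathlib

section
/- If S is an infinite binary sequence with finite-state strong dimension 0, then S is finite-state shallow. -/
open scoped ENNReal

/-- A finite-state transducer with state set `Fin n`, binary input alphabet,
binary-string outputs, initial state `q0`, and all states reachable from `q0`. -/
structure FST where
  /-- number of states -/
  n : ℕ
  npos : 0 < n
  /-- transition function -/
  δ : Fin n → Bool → Fin n
  /-- output function -/
  ν : Fin n → Bool → List Bool
  /-- initial state -/
  q0 : Fin n
  /-- every state is reachable from the initial state -/
  reach : ∀ q : Fin n, ∃ x : List Bool, x.foldl δ q0 = q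

namespace FST

/-- The state reached from state `q` after reading input `x`. -/
def stateFrom (T : FST) (q : Fin T.n) (x : List Bool) : Fin T.n := x.foldl T.δ q

/-- The extended transition function: the state reached from the initial state on input `x`. -/
def finalState (T : FST) (x : List Bool) : Fin T.n := T.stateFrom T.q0 x

/-- The output produced starting from state `q` on input `x`. -/
def outFrom (T : FST) : Fin T.n → List Bool → List Bool
  | _, [] => []
  | q, a :: x => T.ν q a ++ T.outFrom (T.δ q a) x

/-- The output of `T` on input `x` (started in the initial state). -/
def out (T : FST) (x : List Bool) : List Bool := T.outFrom T.q0 x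

/-- `T` is information lossless if the pair (output, final state) determines the input. -/
def IL (T : FST) : Prop := Function.Injective fun x : List Bool => (T.out x, T.finalState x)

/-- The data of an FST, as a member of an encodable type. -/
def toSigma (T : FST) :
    Σ n : ℕ, (Fin n → Bool → Fin n) × (Fin n → Bool → List Bool) × Fin n :=
  ⟨T.n, T.δ, T.ν, T.q0⟩

/-- The length `|T|` of the standard binary encoding of the FST `T`. -/
noncomputable def size (T : FST) : ℕ := Nat.size (Encodable.encode T.toSigma)

end FST

/-- The `k`-FS decompression complexity of `x`: the length of a shortest program `p`
such that some FST of encoding length at most `k` outputs `x` on input `p`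
(`⊤` if there is no such program). -/
noncomputable def Dfs (k : ℕ) (x : List Bool) : ℕ∞ :=
  ⨅ (p : List Bool) (_ : ∃ T : FST, T.size ≤ k ∧ T.out p = x), (p.length : ℕ∞)

/-- The first `n` bits of the infinite sequence `S`, as a list. -/
def pre (S : ℕ → Bool) (n : ℕ) : List Bool := (List.range n).map S

/-- A sequence is finite-state deep if for some `α > 0` and every `k` there is `k'` such that
`Dfs k (S↾n) - Dfs k' (S↾n) ≥ α n` for infinitely many `n`. -/
def FSDeep (S : ℕ → Bool) : Prop :=
  ∃ α : ℝ, 0 < α ∧ ∀ k : ℕ, ∃ k' : ℕ, ∃ᶠ n in Filter.atTop,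
    Dfs k' (pre S n) + (⌈α * n⌉₊ : ℕ∞) ≤ Dfs k (pre S n)

/-- The finite-state strong dimension of a sequence:
`Dim_FS(S) = lim_{k→∞} limsup_n Dfs k (S↾n) / n` (the limit over `k` of the
nonincreasing quantities is their infimum). -/
noncomputable def DimFS (S : ℕ → Bool) : ℝ≥0∞ :=
  ⨅ k : ℕ, Filter.atTop.limsup fun n : ℕ => ((Dfs k (pre S n) : ℝ≥0∞) / n)

/-- A sequence of finite-state strong dimension 0 is finite-state shallow. -/
theorem fs_trivial_is_shallow (S : ℕ → Bool) (h : DimFS S = 0) : ¬ FSDeep S := by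
  rintro ⟨α, hα, hdeep⟩
  have key : ENNReal.ofReal α ≤ DimFS S := by
    refine le_iInf fun k => ?_
    obtain ⟨k', hk'⟩ := hdeep k
    refine Filter.le_limsup_of_frequently_le ?_
    have := hk'.and_eventually (Filter.eventually_ge_atTop 1)
    refine this.mono ?_
    rintro n ⟨hle, hn⟩
    have h1 : (⌈α * n⌉₊ : ℕ∞) ≤ Dfs k (pre S n) := le_trans (by simp) hle
    have h2 : ((⌈α * n⌉₊ : ℕ) : ℝ≥0∞) ≤ ((Dfs k (pre S n) : ℕ∞) : ℝ≥0∞) := by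
      exact_mod_cast h1
    have hn0 : (n : ℝ≥0∞) ≠ 0 := (Nat.cast_ne_zero (R := ℝ≥0∞)).mpr (Nat.one_le_iff_ne_zero.mp hn)
    have hnt : (n : ℝ≥0∞) ≠ ⊤ := ENNReal.natCast_ne_top n
    have h3 : ENNReal.ofReal α ≤ ((⌈α * n⌉₊ : ℕ) : ℝ≥0∞) / n := by
      rw [ENNReal.le_div_iff_mul_le (Or.inl hn0) (Or.inl hnt)]
      have : ENNReal.ofReal α * (n : ℝ≥0∞) = ENNReal.ofReal (α * n) := by
        rw [ENNReal.ofReal_mul hα.le, ENNReal.ofReal_natCast]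
      rw [this]
      calc ENNReal.ofReal (α * n) ≤ ENNReal.ofReal (⌈α * n⌉₊ : ℝ) :=
            ENNReal.ofReal_le_ofReal (Nat.le_ceil _)
        _ = ((⌈α * n⌉₊ : ℕ) : ℝ≥0∞) := ENNReal.ofReal_natCast _
    exact h3.trans (ENNReal.div_le_div_right h2 _)
  rw [h] at key
  simp only [nonpos_iff_eq_zero, ENNReal.ofReal_eq_zero] at key
  linarith
end

section
/- If S is an infinite binary sequence with finite-state dimension 1 (equivalently, S is Borel normal), then S is finite-state shallow. -/
open scoped ENNReal

/-- The finite-state dimension of a sequence: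
`dim_FS(S) = lim_{k→∞} liminf_n Dfs k (S↾n) / n` (the limit over `k` of the
nonincreasing quantities is their infimum). -/
noncomputable def dimFS (S : ℕ → Bool) : ℝ≥0∞ :=
  ⨅ k : ℕ, Filter.atTop.liminf fun n : ℕ => ((Dfs k (pre S n) : ℝ≥0∞) / n)

/-- The identity transducer. -/
def idFST : FST where
  n := 1
  npos := one_pos
  δ := fun q _ => q
  ν := fun _ a => [a]
  q0 := 0
  reach := fun q => ⟨[], Subsingleton.elim _ _⟩

lemma idFST_outFrom (q : Fin 1) (x : List Bool) : idFST.outFrom q x = x := by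
  induction x generalizing q with
  | nil => rfl
  | cons a x ih => simpa [FST.outFrom, idFST] using ih _

lemma idFST_out (x : List Bool) : idFST.out x = x := idFST_outFrom _ _

lemma Dfs_le_length (x : List Bool) : Dfs idFST.size x ≤ (x.length : ℕ∞) := by
  refine iInf₂_le x ⟨idFST, le_rfl, idFST_out x⟩

lemma pre_length (S : ℕ → Bool) (n : ℕ) : (pre S n).length = n := by simp [pre]

/-- A sequence of finite-state dimension 1 (equivalently, a Borel normal sequence) is
finite-state shallow. -/
theorem fs_random_is_shallow (S : ℕ → Bool) (h : dimFS S = 1) : ¬ FSDeep S := by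
  rintro ⟨α, hα, hdeep⟩
  obtain ⟨k', hk'⟩ := hdeep idFST.size
  set α' : ℝ := min α (1/2) with hα'def
  have hα'pos : 0 < α' := lt_min hα (by norm_num)
  have hα'le : α' ≤ α := min_le_left _ _
  have hlim : (1 : ℝ≥0∞) ≤ Filter.atTop.liminf
      fun n : ℕ => ((Dfs k' (pre S n) : ℝ≥0∞) / n) := by
    rw [← h]; exact iInf_le _ k'
  have hc : (1 : ℝ≥0∞) - ENNReal.ofReal α' < 1 :=
    ENNReal.sub_lt_self ENNReal.one_ne_top one_ne_zero
      (by simp [ENNReal.ofReal_pos.mpr hα'pos, ne_of_gt])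
  have hfreq : ∃ᶠ n in Filter.atTop,
      ((Dfs k' (pre S n) : ℝ≥0∞) / n) ≤ 1 - ENNReal.ofReal α' := by
    refine (hk'.and_eventually (Filter.eventually_ge_atTop 1)).mono ?_
    rintro n ⟨hn, hn1⟩
    have hle : Dfs k' (pre S n) + (⌈α * n⌉₊ : ℕ∞) ≤ (n : ℕ∞) := by
      refine hn.trans ((Dfs_le_length _).trans ?_)
      simp [pre_length]
    have hcast : (Dfs k' (pre S n) : ℝ≥0∞) + (⌈α * n⌉₊ : ℝ≥0∞) ≤ (n : ℝ≥0∞) := by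
      have := ENat.toENNReal_le.mpr hle
      simpa using this
    have hm : ENNReal.ofReal α' * (n : ℝ≥0∞) ≤ (⌈α * n⌉₊ : ℝ≥0∞) := by
      rw [← ENNReal.ofReal_natCast n, ← ENNReal.ofReal_mul hα'pos.le,
        ← ENNReal.ofReal_natCast (⌈α * n⌉₊)]
      refine ENNReal.ofReal_le_ofReal ?_
      calc α' * (n : ℝ) ≤ α * n := by
            exact mul_le_mul_of_nonneg_right hα'le (Nat.cast_nonneg n)
        _ ≤ (⌈α * n⌉₊ : ℝ) := Nat.le_ceil _
    have hD : (Dfs k' (pre S n) : ℝ≥0∞) ≤ (1 - ENNReal.ofReal α') * (n : ℝ≥0∞) := by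
      have h1 : (Dfs k' (pre S n) : ℝ≥0∞) ≤ (n : ℝ≥0∞) - (⌈α * n⌉₊ : ℝ≥0∞) :=
        ENNReal.le_sub_of_add_le_right (ENNReal.natCast_ne_top _) hcast
      have h2 : (n : ℝ≥0∞) - (⌈α * n⌉₊ : ℝ≥0∞)
          ≤ (n : ℝ≥0∞) - ENNReal.ofReal α' * (n : ℝ≥0∞) := tsub_le_tsub_left hm _
      have h3 : (1 - ENNReal.ofReal α') * (n : ℝ≥0∞)
          = (n : ℝ≥0∞) - ENNReal.ofReal α' * (n : ℝ≥0∞) := by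
        rw [ENNReal.sub_mul (fun _ _ => ENNReal.natCast_ne_top n), one_mul]
      rw [h3]
      exact h1.trans h2
    exact ENNReal.div_le_of_le_mul hD
  exact absurd (hlim.trans (Filter.liminf_le_of_frequently_le' hfreq))
    (not_le.mpr hc)
end

section
/- Finite-state slow growth law: Let S be an infinite binary sequence, let f be a function on infinite binary sequences computable by an information lossless finite-state transducer, and let S' = f(S). If S' is finite-state deep, then S is finite-state deep. -/
/-- `T` computes the sequence `R` from the sequence `S`: the outputs on prefixes of `S`
have unbounded length and are prefixes of `R`. -/
def FST.computes (T : FST) (S R : ℕ → Bool) : Prop :=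
  Filter.Tendsto (fun n => (T.out (pre S n)).length) Filter.atTop Filter.atTop ∧
  ∀ n : ℕ, T.out (pre S n) = pre R (T.out (pre S n)).length

/- ### Preliminaries -/

namespace SGL

open List

lemma pre_append (S : ℕ → Bool) {a b : ℕ} (h : a ≤ b) :
    pre S b = pre S a ++ ((List.range' a (b - a)).map S) := by
  unfold pre
  rw [← List.map_append]
  congr 1
  rw [List.range_eq_range' , List.range_eq_range']
  have := List.range'_append (s := 0) (m := a) (n := b - a) (step := 1)
  simp only [one_mul, zero_add] at this
  rw [show a + (b - a) = b by omega] at this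
  exact this.symm

/-- the segment S[a..b) -/
def seg (S : ℕ → Bool) (a b : ℕ) : List Bool := (List.range' a (b - a)).map S

lemma pre_add_seg (S : ℕ → Bool) {a b : ℕ} (h : a ≤ b) :
    pre S a ++ seg S a b = pre S b := (pre_append S h).symm

lemma seg_length (S : ℕ → Bool) (a b : ℕ) : (seg S a b).length = b - a := by
  simp [seg]

lemma pre_length (S : ℕ → Bool) (n : ℕ) : (pre S n).length = n := by simp [pre]

lemma seg_append (S : ℕ → Bool) {a b c : ℕ} (hab : a ≤ b) (hbc : b ≤ c) :
    seg S a b ++ seg S b c = seg S a c := by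
  have h1 := pre_add_seg S hab
  have h2 := pre_add_seg S hbc
  have h3 := pre_add_seg S (hab.trans hbc)
  rw [← h1, List.append_assoc] at h2
  rw [← h3] at h2
  exact (List.append_cancel_left h2)

lemma seg_self (S : ℕ → Bool) (a : ℕ) : seg S a a = [] := by simp [seg]

lemma pre_zero (S : ℕ → Bool) : pre S 0 = [] := by simp [pre]

lemma pre_eq_seg (S : ℕ → Bool) (n : ℕ) : pre S n = seg S 0 n := by
  have := pre_add_seg S (Nat.zero_le n)
  rw [pre_zero, List.nil_append] at this
  exact this.symm

lemma pre_succ (S : ℕ → Bool) (n : ℕ) : pre S (n + 1) = pre S n ++ [S n] := by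
  have := pre_add_seg S (Nat.le_succ n)
  rw [← this]
  congr 1
  simp [seg]

/-- little-endian bits of a natural number -/
def natToBits : ℕ → ℕ → List Bool
  | 0, _ => []
  | d + 1, v => (v % 2 = 1) :: natToBits d (v / 2)

def bitsToNat (l : List Bool) : ℕ := l.foldr (fun b n => 2 * n + (if b then 1 else 0)) 0

lemma natToBits_length (d v : ℕ) : (natToBits d v).length = d := by
  induction d generalizing v with
  | zero => rfl
  | succ d ih => simp [natToBits, ih]

lemma bitsToNat_natToBits {d v : ℕ} (h : v < 2 ^ d) : bitsToNat (natToBits d v) = v := by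
  induction d generalizing v with
  | zero => simp at h; simp [h, natToBits, bitsToNat]
  | succ d ih =>
    have h2 : v / 2 < 2 ^ d := by
      rw [pow_succ] at h; omega
    simp only [natToBits, bitsToNat, List.foldr_cons]
    have := ih h2
    simp only [bitsToNat] at this
    rw [this]
    rcases Nat.even_or_odd v with he | ho
    · obtain ⟨t, ht⟩ := he
      have : v % 2 = 0 := by omega
      simp [this]
      omega
    · obtain ⟨t, ht⟩ := ho
      have : v % 2 = 1 := by omega
      simp [this]
      omega

/-- Bounded lists are finite. -/
instance finiteBoundedList (n : ℕ) : Finite {l : List Bool // l.length < n} := by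
  apply Finite.of_injective (fun l => (fun i : Fin n => l.1[(i : ℕ)]?))
  intro l₁ l₂ h
  apply Subtype.ext
  apply List.ext_getElem?
  intro i
  by_cases hi : i < n
  · exact congrFun h ⟨i, hi⟩
  · rw [List.getElem?_eq_none, List.getElem?_eq_none] <;> omega

instance finiteBoundedList' (n : ℕ) : Finite {l : List Bool // l.length ≤ n} := by
  apply Finite.of_injective (fun l : {l : List Bool // l.length ≤ n} =>
    (⟨l.1, by have := l.2; omega⟩ : {l : List Bool // l.length < n + 1}))
  intro l₁ l₂ h
  apply Subtype.ext
  have := congrArg Subtype.val h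
  exact this

end SGL
namespace SGL

/- ### FST basic lemmas -/
namespace FSTLemmas

lemma FST.stateFrom_append (T : FST) (q : Fin T.n) (x y : List Bool) :
    T.stateFrom q (x ++ y) = T.stateFrom (T.stateFrom q x) y := by
  simp [FST.stateFrom, List.foldl_append]

lemma FST.outFrom_append (T : FST) (q : Fin T.n) (x y : List Bool) :
    T.outFrom q (x ++ y) = T.outFrom q x ++ T.outFrom (T.stateFrom q x) y := by
  induction x generalizing q with
  | nil => simp [FST.outFrom, FST.stateFrom]
  | cons a x ih =>
    simp only [List.cons_append, FST.outFrom, List.append_eq, ih, FST.stateFrom,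
      List.foldl_cons, List.append_assoc]

lemma FST.out_append (T : FST) (x y : List Bool) :
    T.out (x ++ y) = T.out x ++ T.outFrom (T.finalState x) y :=
  FST.outFrom_append T T.q0 x y

lemma FST.finalState_append (T : FST) (x y : List Bool) :
    T.finalState (x ++ y) = T.stateFrom (T.finalState x) y :=
  FST.stateFrom_append T T.q0 x y

/-- the key uniqueness property from IL + reachability -/
lemma IL_unique {M : FST} (hM : M.IL) {q : Fin M.n} (x0 : List Bool)
    (hx0 : M.finalState x0 = q) {v₁ v₂ : List Bool}
    (ho : M.outFrom q v₁ = M.outFrom q v₂) (hs : M.stateFrom q v₁ = M.stateFrom q v₂) :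
    v₁ = v₂ := by
  have h1 : x0 ++ v₁ = x0 ++ v₂ := by
    apply hM
    simp only [Prod.mk.injEq, FST.out_append, FST.finalState_append, hx0, ho, hs]
  exact List.append_cancel_left h1

end FSTLemmas

export FSTLemmas (FST.stateFrom_append FST.outFrom_append FST.out_append
  FST.finalState_append IL_unique)

/- ### Raw machines (machines with an arbitrary finite state type) -/

structure Raw where
  σ : Type
  [fin : Finite σ]
  δ : σ → Bool → σ
  ν : σ → Bool → List Bool
  q0 : σ

attribute [instance] Raw.fin

namespace Raw

def stateFrom (R : Raw) (q : R.σ) (x : List Bool) : R.σ := x.foldl R.δ q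

def outFrom (R : Raw) : R.σ → List Bool → List Bool
  | _, [] => []
  | q, a :: x => R.ν q a ++ R.outFrom (R.δ q a) x

def out (R : Raw) (x : List Bool) : List Bool := R.outFrom R.q0 x

lemma stateFrom_nil (R : Raw) (q : R.σ) : R.stateFrom q [] = q := rfl

lemma stateFrom_cons (R : Raw) (q : R.σ) (a : Bool) (x : List Bool) :
    R.stateFrom q (a :: x) = R.stateFrom (R.δ q a) x := rfl

lemma stateFrom_append (R : Raw) (q : R.σ) (x y : List Bool) :
    R.stateFrom q (x ++ y) = R.stateFrom (R.stateFrom q x) y := by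
  simp [Raw.stateFrom, List.foldl_append]

lemma outFrom_append (R : Raw) (q : R.σ) (x y : List Bool) :
    R.outFrom q (x ++ y) = R.outFrom q x ++ R.outFrom (R.stateFrom q x) y := by
  induction x generalizing q with
  | nil => simp [Raw.outFrom, Raw.stateFrom]
  | cons a x ih =>
    simp only [List.cons_append, Raw.outFrom, List.append_eq, ih, stateFrom_cons,
      List.append_assoc]

lemma out_append (R : Raw) (x y : List Bool) :
    R.out (x ++ y) = R.out x ++ R.outFrom (R.stateFrom R.q0 x) y :=
  outFrom_append R R.q0 x y

/- ### Trimming a raw machine to an FST -/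

@[reducible]
def ReachSet (R : Raw) : Type := {q : R.σ // ∃ x : List Bool, R.stateFrom R.q0 x = q}

instance (R : Raw) : Finite (R.ReachSet) := by unfold Raw.ReachSet; infer_instance

instance (R : Raw) : Nonempty (R.ReachSet) := ⟨⟨R.q0, ⟨[], rfl⟩⟩⟩

noncomputable instance (R : Raw) : Fintype (R.ReachSet) := Fintype.ofFinite _

noncomputable def equivFin (R : Raw) : R.ReachSet ≃ Fin (Fintype.card R.ReachSet) :=
  Fintype.equivFin _

lemma reach_closed (R : Raw) (q : R.ReachSet) (b : Bool) :
    ∃ x : List Bool, R.stateFrom R.q0 x = R.δ q.1 b := by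
  obtain ⟨x, hx⟩ := q.2
  exact ⟨x ++ [b], by rw [R.stateFrom_append, hx]; rfl⟩

@[reducible]
noncomputable def toFST (R : Raw) : FST where
  n := Fintype.card R.ReachSet
  npos := Fintype.card_pos
  δ := fun i b => R.equivFin ⟨R.δ (R.equivFin.symm i).1 b, R.reach_closed _ b⟩
  ν := fun i b => R.ν (R.equivFin.symm i).1 b
  q0 := R.equivFin ⟨R.q0, ⟨[], rfl⟩⟩
  reach := by
    intro i
    obtain ⟨x, hx⟩ := (R.equivFin.symm i).2
    refine ⟨x, ?_⟩
    have key : ∀ (y : List Bool) (j : Fin (Fintype.card R.ReachSet)),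
        y.foldl (fun i b => R.equivFin ⟨R.δ (R.equivFin.symm i).1 b, R.reach_closed _ b⟩) j
          = R.equivFin ⟨R.stateFrom (R.equivFin.symm j).1 y, by
              obtain ⟨z, hz⟩ := (R.equivFin.symm j).2
              exact ⟨z ++ y, by rw [R.stateFrom_append, hz]⟩⟩ := by
      intro y
      induction y with
      | nil => intro j; simp [Raw.stateFrom]; exact (R.equivFin.apply_symm_apply j).symm
      | cons a y ih =>
        intro j
        rw [List.foldl_cons, ih]
        congr 1
        apply Subtype.ext
        simp [stateFrom_cons]
    rw [key, Equiv.apply_eq_iff_eq_symm_apply]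
    apply Subtype.ext
    simp only [Equiv.symm_apply_apply]
    exact hx

lemma toFST_stateFrom (R : Raw) (x : List Bool) (j : Fin R.toFST.n) :
    R.toFST.stateFrom j x = R.equivFin ⟨R.stateFrom (R.equivFin.symm j).1 x, by
      obtain ⟨z, hz⟩ := (R.equivFin.symm j).2
      exact ⟨z ++ x, by rw [R.stateFrom_append, hz]⟩⟩ := by
  induction x generalizing j with
  | nil => exact (R.equivFin.apply_symm_apply j).symm
  | cons a x ih =>
    show R.toFST.stateFrom (R.toFST.δ j a) x = _
    rw [ih]
    congr 1
    apply Subtype.ext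
    show R.stateFrom (R.equivFin.symm (R.toFST.δ j a)).1 x = _
    have : (R.equivFin.symm (R.toFST.δ j a)).1 = R.δ (R.equivFin.symm j).1 a := by
      show (R.equivFin.symm (R.equivFin _)).1 = _
      rw [Equiv.symm_apply_apply]
    rw [this]
    rfl

lemma toFST_outFrom (R : Raw) (x : List Bool) (j : Fin R.toFST.n) :
    R.toFST.outFrom j x = R.outFrom (R.equivFin.symm j).1 x := by
  induction x generalizing j with
  | nil => rfl
  | cons a x ih =>
    show R.toFST.ν j a ++ R.toFST.outFrom (R.toFST.δ j a) x = _
    rw [ih]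
    show R.ν (R.equivFin.symm j).1 a ++ _ = _
    have : (R.equivFin.symm (R.toFST.δ j a)).1 = R.δ (R.equivFin.symm j).1 a := by
      show (R.equivFin.symm (R.equivFin _)).1 = _
      rw [Equiv.symm_apply_apply]
    rw [this]
    rfl

lemma toFST_out (R : Raw) (x : List Bool) : R.toFST.out x = R.out x := by
  show R.toFST.outFrom R.toFST.q0 x = _
  rw [toFST_outFrom]
  show R.outFrom (R.equivFin.symm (R.equivFin _)).1 x = _
  rw [Equiv.symm_apply_apply]
  rfl

end Raw

end SGL
namespace SGL

/- ### Dfs lemmas -/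

lemma Dfs_le {k : ℕ} {x p : List Bool} (h : ∃ T : FST, T.size ≤ k ∧ T.out p = x) :
    Dfs k x ≤ (p.length : ℕ∞) := by
  unfold Dfs
  exact iInf_le_of_le p (iInf_le_of_le h le_rfl)

lemma Dfs_anti {k k' : ℕ} (hk : k ≤ k') (x : List Bool) : Dfs k' x ≤ Dfs k x := by
  unfold Dfs
  apply le_iInf₂
  intro p hp
  obtain ⟨T, hT, hout⟩ := hp
  exact iInf_le_of_le p (iInf_le_of_le ⟨T, hT.trans hk, hout⟩ le_rfl)

lemma Dfs_spec {k : ℕ} {x : List Bool} (h : Dfs k x ≠ ⊤) :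
    ∃ p : List Bool, (∃ T : FST, T.size ≤ k ∧ T.out p = x) ∧ Dfs k x = (p.length : ℕ∞) := by
  have hne : ∃ p : List Bool, ∃ T : FST, T.size ≤ k ∧ T.out p = x := by
    by_contra hc
    push_neg at hc
    apply h
    unfold Dfs
    rw [iInf_eq_top]
    intro p
    exact iInf_neg (by push_neg; exact fun T hT => hc p T hT)
  classical
  have hP : ∃ n : ℕ, ∃ p : List Bool, p.length = n ∧ ∃ T : FST, T.size ≤ k ∧ T.out p = x := by
    obtain ⟨p, hp⟩ := hne
    exact ⟨p.length, p, rfl, hp⟩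
  obtain ⟨p, hp1, hp2⟩ := Nat.find_spec hP
  refine ⟨p, hp2, le_antisymm ?_ ?_⟩
  · exact Dfs_le hp2
  · unfold Dfs
    apply le_iInf₂
    intro q hq
    rw [hp1]
    have : Nat.find hP ≤ q.length := Nat.find_min' hP ⟨q, rfl, hq⟩
    exact_mod_cast this

/-- the data of an FST -/
abbrev FSTData := Σ n : ℕ, (Fin n → Bool → Fin n) × (Fin n → Bool → List Bool) × Fin n

set_option maxHeartbeats 1600000 in
/-- Uniform bound over all FSTs of size at most `k`. -/
lemma exists_uniform_bound (k : ℕ) (G : FSTData → ℕ) :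
    ∃ K : ℕ, ∀ T : FST, T.size ≤ k → G T.toSigma ≤ K := by
  refine ⟨(Finset.range (2 ^ k)).sup
    (fun i => (Encodable.decode₂ FSTData i).elim 0 G), fun T h => ?_⟩
  have henc : Encodable.encode T.toSigma < 2 ^ k := Nat.size_le.mp h
  have := Finset.le_sup (f := fun i => (Encodable.decode₂ FSTData i).elim 0 G)
    (Finset.mem_range.2 henc)
  simpa only [Encodable.decode₂_encode, Option.elim] using this

/- ### concrete machines -/

/-- a raw machine from FST data -/
def Raw.ofData (s : FSTData) : Raw where
  σ := Fin s.1
  δ := s.2.1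
  ν := s.2.2.1
  q0 := s.2.2.2

lemma Raw.ofData_outFrom (T : FST) (q : Fin T.n) (x : List Bool) :
    (Raw.ofData T.toSigma).outFrom q x = T.outFrom q x := by
  induction x generalizing q with
  | nil => rfl
  | cons a x ih =>
    show T.ν q a ++ (Raw.ofData T.toSigma).outFrom (T.δ q a) x = _
    rw [ih]
    rfl

lemma Raw.ofData_stateFrom (T : FST) (q : Fin T.n) (x : List Bool) :
    (Raw.ofData T.toSigma).stateFrom q x = T.stateFrom q x := rfl

lemma Raw.ofData_out (T : FST) (x : List Bool) :
    (Raw.ofData T.toSigma).out x = T.out x := Raw.ofData_outFrom T T.q0 x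

/-- the identity machine -/
@[reducible]
def Raw.id : Raw where
  σ := Unit
  δ := fun _ _ => ()
  ν := fun _ b => [b]
  q0 := ()

lemma Raw.id_out (x : List Bool) : Raw.id.out x = x := by
  have : ∀ (x : List Bool) (q : Unit), Raw.id.outFrom q x = x := by
    intro x
    induction x with
    | nil => intro q; rfl
    | cons a x ih => intro q; show [a] ++ _ = _; rw [ih]; rfl
  exact this x ()

/-- composition: feed the output of `B` into `A` -/
def Raw.comp (A B : Raw) : Raw where
  σ := B.σ × A.σ
  δ := fun q b => (B.δ q.1 b, A.stateFrom q.2 (B.ν q.1 b))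
  ν := fun q b => A.outFrom q.2 (B.ν q.1 b)
  q0 := (B.q0, A.q0)

lemma Raw.comp_outFrom (A B : Raw) (qb : B.σ) (qa : A.σ) (x : List Bool) :
    (A.comp B).outFrom (qb, qa) x = A.outFrom qa (B.outFrom qb x) := by
  induction x generalizing qb qa with
  | nil => rfl
  | cons a x ih =>
    show A.outFrom qa (B.ν qb a) ++ (A.comp B).outFrom (B.δ qb a, A.stateFrom qa (B.ν qb a)) x
      = A.outFrom qa (B.ν qb a ++ B.outFrom (B.δ qb a) x)
    rw [ih, A.outFrom_append]

lemma Raw.comp_stateFrom (A B : Raw) (qb : B.σ) (qa : A.σ) (x : List Bool) :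
    (A.comp B).stateFrom (qb, qa) x = (B.stateFrom qb x, A.stateFrom qa (B.outFrom qb x)) := by
  induction x generalizing qb qa with
  | nil => rfl
  | cons a x ih =>
    show (A.comp B).stateFrom (B.δ qb a, A.stateFrom qa (B.ν qb a)) x = _
    rw [ih, ← A.stateFrom_append]
    rfl

lemma Raw.comp_out (A B : Raw) (x : List Bool) :
    (A.comp B).out x = A.out (B.out x) := Raw.comp_outFrom A B B.q0 A.q0 x

/-- the machine that drops the last `r` bits of its input -/
@[reducible]
def Raw.trunc (r : ℕ) : Raw where
  σ := {l : List Bool // l.length ≤ r}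
  δ := fun l b => ⟨(l.1 ++ [b]).drop (l.1.length + 1 - r), by
    simp only [List.length_drop, List.length_append, List.length_cons, List.length_nil]
    omega⟩
  ν := fun l b => (l.1 ++ [b]).take (l.1.length + 1 - r)
  q0 := ⟨[], by simp⟩

lemma Raw.trunc_outFrom (r : ℕ) (x : List Bool) :
    ∀ (l : List Bool) (hl : l.length ≤ r),
      (Raw.trunc r).outFrom ⟨l, hl⟩ x = (l ++ x).take (l.length + x.length - r) := by
  induction x with
  | nil =>
    intro l hl
    have h0 : l.length + ([] : List Bool).length - r = 0 := by simp; omega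
    rw [h0, List.take_zero]
    rfl
  | cons a x ih =>
    intro l hl
    have step : (Raw.trunc r).outFrom ⟨l, hl⟩ (a :: x) =
        (l ++ [a]).take (l.length + 1 - r) ++
          (Raw.trunc r).outFrom ⟨(l ++ [a]).drop (l.length + 1 - r), by
            simp only [List.length_drop, List.length_append, List.length_cons,
              List.length_nil]
            omega⟩ x := rfl
    rw [step, ih]
    have hdlen : ((l ++ [a]).drop (l.length + 1 - r)).length = min r (l.length + 1) := by
      simp only [List.length_drop, List.length_append, List.length_cons, List.length_nil]
      omega
    rcases Nat.lt_or_ge l.length r with hc | hc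
    · have e1 : l.length + 1 - r = 0 := by omega
      rw [e1, List.take_zero, List.drop_zero, List.nil_append]
      rw [List.append_assoc]
      have e2 : (l ++ [a]).length + x.length - r = l.length + (a :: x).length - r := by
        simp only [List.length_append, List.length_cons, List.length_nil]
        omega
      rw [e2]
      rfl
    · have hc2 : l.length = r := le_antisymm hl hc
      have e1 : l.length + 1 - r = 1 := by omega
      rw [e1]
      have e2 : ((l ++ [a]).drop 1).length + x.length - r = x.length := by
        simp only [List.length_drop, List.length_append, List.length_cons, List.length_nil]
        omega
      rw [e2]
      have e3 : l.length + (a :: x).length - r = 1 + x.length := by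
        simp only [List.length_cons]
        omega
      rw [e3, List.take_add]
      have assoc : l ++ a :: x = (l ++ [a]) ++ x := by simp
      rw [assoc]
      congr 1
      · rw [List.take_append_of_le_length (l₁ := l ++ [a]) (l₂ := x) (by simp)]
      · rw [List.drop_append_of_le_length (l₁ := l ++ [a]) (by simp)]

lemma Raw.trunc_out (r : ℕ) (x : List Bool) :
    (Raw.trunc r).out x = x.take (x.length - r) := by
  have := Raw.trunc_outFrom r x [] (by simp [Raw.trunc])
  simp at this; exact this

end SGL
namespace SGL

lemma Raw.outFrom_cons (R : Raw) (q : R.σ) (a : Bool) (x : List Bool) :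
    R.outFrom q (a :: x) = R.ν q a ++ R.outFrom (R.δ q a) x := rfl

/-- a decoder for a finite nonempty type -/
lemma exists_decoder (A : Type) [Finite A] [Nonempty A] :
    ∃ d0 : ℕ, 0 < d0 ∧ ∃ dec : List Bool → A,
      ∀ a : A, ∃ w : List Bool, w.length = d0 ∧ dec w = a := by
  classical
  letI : Fintype A := Fintype.ofFinite A
  have hnpos : 0 < Fintype.card A := Fintype.card_pos
  set e := Fintype.equivFin A with he
  refine ⟨Fintype.card A, hnpos,
    fun w => e.symm ⟨bitsToNat w % Fintype.card A, Nat.mod_lt _ hnpos⟩, fun a => ?_⟩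
  refine ⟨natToBits (Fintype.card A) (e a), natToBits_length _ _, ?_⟩
  have h1 : (e a : ℕ) < 2 ^ Fintype.card A :=
    lt_of_lt_of_le (e a).2 (Nat.le_of_lt (Nat.lt_two_pow_self))
  dsimp only
  rw [bitsToNat_natToBits h1]
  have h2 : (⟨(e a : ℕ) % Fintype.card A, Nat.mod_lt _ hnpos⟩ : Fin (Fintype.card A)) = e a :=
    Fin.ext (Nat.mod_eq_of_lt (e a).2)
  rw [h2, Equiv.symm_apply_apply]

section Wsec

variable (M : FST) (U : Raw) (L c d0 : ℕ)

/-- advice: target state, new residual, extra output bits -/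
def Adv : Type := Fin M.n × {l : List Bool // l.length < c} × {l : List Bool // l.length < c}

instance : Finite (Adv M c) := by unfold Adv; infer_instance

lemma Adv.nonempty (hc : 0 < c) : Nonempty (Adv M c) :=
  ⟨⟨M.q0, ⟨[], by simpa using hc⟩, ⟨[], by simpa using hc⟩⟩⟩

open scoped Classical in
/-- choose the unique input piece consistent with the advice -/
noncomputable def pick (q : Fin M.n) (z : List Bool) (a : Adv M c) : List Bool :=
  if h : ∃ v : List Bool, M.stateFrom q v = a.1 ∧ M.outFrom q v ++ a.2.1.1 = z ++ a.2.2.1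
  then h.choose else []

lemma pick_eq (hM : M.IL) {q : Fin M.n} (x0 : List Bool) (hx0 : M.finalState x0 = q)
    {z v : List Bool} {a : Adv M c} (hs : M.stateFrom q v = a.1)
    (ho : M.outFrom q v ++ a.2.1.1 = z ++ a.2.2.1) : pick M c q z a = v := by
  unfold pick
  rw [dif_pos ⟨v, hs, ho⟩]
  have hspec := (⟨v, hs, ho⟩ : ∃ v : List Bool, M.stateFrom q v = a.1 ∧
    M.outFrom q v ++ a.2.1.1 = z ++ a.2.2.1).choose_spec
  apply IL_unique hM x0 hx0
  · exact List.append_cancel_right (hspec.2.trans ho.symm)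
  · exact hspec.1.trans hs.symm

variable (dec : List Bool → Adv M c)

@[reducible]
def Wmode : Type := Fin (L + 1) ⊕ (Fin (L + 1) × {l : List Bool // l.length < d0 + L})

instance : Finite (Wmode L d0) := by unfold Wmode; infer_instance

@[reducible]
def Wstate : Type := U.σ × Fin M.n × {l : List Bool // l.length < c} × Wmode L d0

instance : Finite (Wstate M U L c d0) := by unfold Wstate; infer_instance

/-- the empty buffer -/
def emptyBuf (hd : 0 < d0) : {l : List Bool // l.length < d0 + L} :=
  ⟨[], by simp; omega⟩

/-- the value `L` in `Fin (L+1)` -/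
def lamL : Fin (L + 1) := ⟨L, Nat.lt_succ_self L⟩

/-- transition of the inverting machine -/
def Wdelta (hd : 0 < d0) : Wstate M U L c d0 → Bool → Wstate M U L c d0
  | (s, q, r, Sum.inl cnt), b =>
    if b then (s, q, r, Sum.inr (cnt, emptyBuf L d0 hd))
    else (s, q, r, Sum.inl (if h : (cnt : ℕ) + 1 ≤ L then ⟨(cnt : ℕ) + 1, by omega⟩ else cnt))
  | (s, q, r, Sum.inr (lam, buf)), b =>
    if h : buf.1.length + 2 ≤ d0 + lam.1 then
      (s, q, r, Sum.inr (lam, ⟨buf.1 ++ [b], by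
        have h2 := lam.2
        simp only [List.length_append, List.length_cons, List.length_nil]
        omega⟩))
    else
      (U.stateFrom s ((buf.1 ++ [b]).drop d0), (dec ((buf.1 ++ [b]).take d0)).1,
        (dec ((buf.1 ++ [b]).take d0)).2.1,
        Sum.inr (lamL L, emptyBuf L d0 hd))

/-- output function of the inverting machine -/
noncomputable def Wnu : Wstate M U L c d0 → Bool → List Bool
  | (_, _, _, Sum.inl _), _ => []
  | (s, q, r, Sum.inr (lam, buf)), b =>
    if buf.1.length + 2 ≤ d0 + lam.1 then []
    else pick M c q (r.1 ++ U.outFrom s ((buf.1 ++ [b]).drop d0)) (dec ((buf.1 ++ [b]).take d0))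

/-- the inverting machine -/
@[reducible]
noncomputable def W (hc : 0 < c) (hd : 0 < d0) : Raw where
  σ := Wstate M U L c d0
  δ := Wdelta M U L c d0 dec hd
  ν := Wnu M U L c d0 dec
  q0 := (U.q0, M.q0, ⟨[], hc⟩, Sum.inl ⟨0, by omega⟩)

variable (hc : 0 < c) (hd : 0 < d0)

lemma W_count (s : U.σ) (q : Fin M.n) (r : {l : List Bool // l.length < c}) :
    ∀ (j : ℕ) (cnt : Fin (L + 1)) (hcnt : (cnt : ℕ) + j ≤ L),
      (W M U L c d0 dec hc hd).stateFrom (s, q, r, Sum.inl cnt) (List.replicate j false)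
          = (s, q, r, Sum.inl ⟨(cnt : ℕ) + j, by omega⟩)
        ∧ (W M U L c d0 dec hc hd).outFrom (s, q, r, Sum.inl cnt) (List.replicate j false)
          = [] := by
  intro j
  induction j with
  | zero =>
    intro cnt hcnt
    refine ⟨?_, rfl⟩
    have h0 : cnt = (⟨(cnt : ℕ) + 0, by omega⟩ : Fin (L + 1)) := Fin.ext (by simp)
    exact congrArg (fun z => (s, q, r, Sum.inl z)) h0
  | succ j ih =>
    intro cnt hcnt
    have hstep : (W M U L c d0 dec hc hd).δ (s, q, r, Sum.inl cnt) false
        = (s, q, r, Sum.inl ⟨(cnt : ℕ) + 1, by omega⟩) := by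
      show Wdelta M U L c d0 dec hd (s, q, r, Sum.inl cnt) false = _
      show Wdelta M U L c d0 dec hd (s, q, r, Sum.inl cnt) false = _
      simp only [Wdelta, Bool.false_eq_true, if_false]
      rw [dif_pos (by omega : (cnt : ℕ) + 1 ≤ L)]
    have hν : (W M U L c d0 dec hc hd).ν (s, q, r, Sum.inl cnt) false = [] := rfl
    rw [List.replicate_succ]
    constructor
    · rw [Raw.stateFrom_cons, hstep,
        (ih ⟨(cnt : ℕ) + 1, by omega⟩ (by show (cnt : ℕ) + 1 + j ≤ L; omega)).1]
      have h0 : (⟨(cnt : ℕ) + 1 + j, by omega⟩ : Fin (L + 1))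
          = (⟨(cnt : ℕ) + (j + 1), by omega⟩ : Fin (L + 1)) :=
        Fin.ext (by show (cnt : ℕ) + 1 + j = (cnt : ℕ) + (j + 1); omega)
      exact congrArg (fun z => (s, q, r, Sum.inl z)) h0
    · rw [Raw.outFrom_cons, hstep, hν,
        (ih ⟨(cnt : ℕ) + 1, by omega⟩ (by show (cnt : ℕ) + 1 + j ≤ L; omega)).2]
      rfl

lemma W_go (s : U.σ) (q : Fin M.n) (r : {l : List Bool // l.length < c}) (cnt : Fin (L + 1)) :
    (W M U L c d0 dec hc hd).δ (s, q, r, Sum.inl cnt) true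
        = (s, q, r, Sum.inr (cnt, emptyBuf L d0 hd))
      ∧ (W M U L c d0 dec hc hd).ν (s, q, r, Sum.inl cnt) true = [] := by
  refine ⟨?_, rfl⟩
  show Wdelta M U L c d0 dec hd (s, q, r, Sum.inl cnt) true = _
  simp only [Wdelta]
  simp

lemma W_round (s : U.σ) (q : Fin M.n) (r : {l : List Bool // l.length < c})
    (lam : Fin (L + 1)) :
    ∀ (X : List Bool) (buf : {l : List Bool // l.length < d0 + L}),
      buf.1.length + X.length = d0 + (lam : ℕ) → 0 < X.length →
      (W M U L c d0 dec hc hd).stateFrom (s, q, r, Sum.inr (lam, buf)) X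
          = (U.stateFrom s ((buf.1 ++ X).drop d0), (dec ((buf.1 ++ X).take d0)).1,
              (dec ((buf.1 ++ X).take d0)).2.1,
              Sum.inr (lamL L, emptyBuf L d0 hd))
        ∧ (W M U L c d0 dec hc hd).outFrom (s, q, r, Sum.inr (lam, buf)) X
          = pick M c q (r.1 ++ U.outFrom s ((buf.1 ++ X).drop d0))
              (dec ((buf.1 ++ X).take d0)) := by
  intro X
  induction X with
  | nil => intro buf h1 h2; simp at h2
  | cons b X ih =>
    intro buf h1 h2
    rcases X with _ | ⟨b2, X2⟩
    · -- last bit of the round: process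
      have hcond : ¬ (buf.1.length + 2 ≤ d0 + (lam : ℕ)) := by
        simp only [List.length_cons, List.length_nil] at h1
        omega
      have hstep : (W M U L c d0 dec hc hd).δ (s, q, r, Sum.inr (lam, buf)) b
          = (U.stateFrom s ((buf.1 ++ [b]).drop d0), (dec ((buf.1 ++ [b]).take d0)).1,
              (dec ((buf.1 ++ [b]).take d0)).2.1,
              Sum.inr (lamL L, emptyBuf L d0 hd)) := by
        show Wdelta M U L c d0 dec hd (s, q, r, Sum.inr (lam, buf)) b = _
        simp only [Wdelta]
        rw [dif_neg hcond]
      have hν : (W M U L c d0 dec hc hd).ν (s, q, r, Sum.inr (lam, buf)) b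
          = pick M c q (r.1 ++ U.outFrom s ((buf.1 ++ [b]).drop d0))
              (dec ((buf.1 ++ [b]).take d0)) := by
        show Wnu M U L c d0 dec (s, q, r, Sum.inr (lam, buf)) b = _
        simp only [Wnu]
        rw [if_neg hcond]
      constructor
      · rw [Raw.stateFrom_cons, hstep]; rfl
      · rw [Raw.outFrom_cons, hstep, hν]
        show _ ++ ([] : List Bool) = _
        rw [List.append_nil]
    · -- accumulate
      have hcond : buf.1.length + 2 ≤ d0 + (lam : ℕ) := by
        simp only [List.length_cons] at h1
        omega
      have hstep : (W M U L c d0 dec hc hd).δ (s, q, r, Sum.inr (lam, buf)) b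
          = (s, q, r, Sum.inr (lam, ⟨buf.1 ++ [b], by
              have h2 := lam.2
              simp only [List.length_append, List.length_cons, List.length_nil]
              omega⟩)) := by
        show Wdelta M U L c d0 dec hd (s, q, r, Sum.inr (lam, buf)) b = _
        simp only [Wdelta]
        rw [dif_pos hcond]
      have hν : (W M U L c d0 dec hc hd).ν (s, q, r, Sum.inr (lam, buf)) b = [] := by
        show Wnu M U L c d0 dec (s, q, r, Sum.inr (lam, buf)) b = _
        simp only [Wnu]
        rw [if_pos hcond]
      have hlen : (buf.1 ++ [b]).length + (b2 :: X2).length = d0 + (lam : ℕ) := by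
        simp only [List.length_append, List.length_cons, List.length_nil] at h1 ⊢
        omega
      have happ : buf.1 ++ [b] ++ (b2 :: X2) = buf.1 ++ (b :: b2 :: X2) := by
        rw [List.append_assoc]; rfl
      constructor
      · rw [Raw.stateFrom_cons, hstep,
          (ih ⟨buf.1 ++ [b], by
            have h2 := lam.2
            simp only [List.length_append, List.length_cons, List.length_nil]
            omega⟩ hlen (by simp)).1]
        rw [happ]
      · rw [Raw.outFrom_cons, hstep, hν,
          (ih ⟨buf.1 ++ [b], by
            have h2 := lam.2
            simp only [List.length_append, List.length_cons, List.length_nil]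
            omega⟩ hlen (by simp)).2, happ]
        rfl

end Wsec

end SGL

namespace SGL

lemma pre_take (S : ℕ → Bool) (i n : ℕ) : (pre S n).take i = pre S (min i n) := by
  unfold pre
  rw [← List.map_take, List.take_range]

lemma take_split {α : Type} (p : List α) {a b : ℕ} (h : a ≤ b) :
    p.take b = p.take a ++ (p.drop a).take (b - a) := by
  rw [show b = a + (b - a) by omega, List.take_add]
  congr 2
  omega

lemma seg_eq_nil (S : ℕ → Bool) {a b : ℕ} (h : b ≤ a) : seg S a b = [] := by
  unfold seg
  rw [Nat.sub_eq_zero_of_le h]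
  rfl

/-- total bounded-list constructor -/
noncomputable def listBound (c : ℕ) (hc : 0 < c) (l : List Bool) :
    {l : List Bool // l.length < c} := by
  classical
  exact if h : l.length < c then ⟨l, h⟩ else ⟨[], by simpa using hc⟩

lemma listBound_eq (c : ℕ) (hc : 0 < c) (l : List Bool) (h : l.length < c) :
    listBound c hc l = ⟨l, h⟩ := by
  unfold listBound
  rw [dif_pos h]

lemma listBound_val (c : ℕ) (hc : 0 < c) (l : List Bool) (h : l.length < c) :
    (listBound c hc l).1 = l := by
  rw [listBound_eq c hc l h]

set_option maxHeartbeats 2000000 in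
/-- Main correctness theorem for the inverting machine `W`. -/
theorem W_main (M : FST) (hM : M.IL) (S S' : ℕ → Bool)
    (hf2 : ∀ n, M.out (pre S n) = pre S' (M.out (pre S n)).length)
    (hinf : Filter.Tendsto (fun n => (M.out (pre S n)).length) Filter.atTop Filter.atTop)
    (c : ℕ) (hc : 0 < c) (hcν : ∀ (q : Fin M.n) (b : Bool), (M.ν q b).length ≤ c)
    (U : Raw) (L d0 : ℕ) (hL : 0 < L) (hd : 0 < d0)
    (dec : List Bool → Adv M c)
    (hdec : ∀ a : Adv M c, ∃ w : List Bool, w.length = d0 ∧ dec w = a)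
    (p : List Bool) (m : ℕ) (hpm : U.out p = pre S' m) :
    ∃ (p' : List Bool) (t : ℕ),
      (W M U L c d0 dec hc hd).out p' = pre S t ∧
      p'.length ≤ p.length + d0 * (p.length / L + 1) + 2 * L + 1 ∧
      m ≤ (M.out (pre S t)).length ∧ (M.out (pre S t)).length < m + c := by
  classical
  set ℓ : ℕ → ℕ := fun n => (M.out (pre S n)).length with hℓdef
  -- basic facts about ℓ
  have hpre0 : pre S 0 = [] := pre_zero S
  have hℓ0 : ℓ 0 = 0 := by
    show (M.out (pre S 0)).length = 0
    rw [hpre0]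
    rfl
  have hsplit : ∀ a b : ℕ, a ≤ b →
      M.out (pre S b) = M.out (pre S a) ++ M.outFrom (M.finalState (pre S a)) (seg S a b) := by
    intro a b hab
    rw [← pre_add_seg S hab]
    exact FST.out_append M _ _
  have hℓmono : ∀ a b : ℕ, a ≤ b → ℓ a ≤ ℓ b := by
    intro a b hab
    show (M.out (pre S a)).length ≤ (M.out (pre S b)).length
    rw [hsplit a b hab]
    simp
  have hseg : ∀ a b : ℕ, a ≤ b →
      M.outFrom (M.finalState (pre S a)) (seg S a b) = seg S' (ℓ a) (ℓ b) := by
    intro a b hab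
    have h1 := hsplit a b hab
    rw [hf2 a, hf2 b] at h1
    have h2 : pre S' (ℓ b) = pre S' (ℓ a) ++ seg S' (ℓ a) (ℓ b) :=
      (pre_add_seg S' (hℓmono a b hab)).symm
    rw [h2] at h1
    exact (List.append_cancel_left h1).symm
  have hstate : ∀ a b : ℕ, a ≤ b →
      M.finalState (pre S b) = M.stateFrom (M.finalState (pre S a)) (seg S a b) := by
    intro a b hab
    rw [← pre_add_seg S hab]
    exact FST.finalState_append M _ _
  have hℓstep : ∀ n : ℕ, ℓ (n + 1) ≤ ℓ n + c := by
    intro n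
    show (M.out (pre S (n+1))).length ≤ _
    rw [pre_succ S n, FST.out_append M]
    have hν : (M.outFrom (M.finalState (pre S n)) [S n]).length ≤ c := by
      show (M.ν (M.finalState (pre S n)) (S n) ++
        M.outFrom (M.δ (M.finalState (pre S n)) (S n)) []).length ≤ c
      have : M.outFrom (M.δ (M.finalState (pre S n)) (S n)) [] = [] := rfl
      rw [this, List.append_nil]
      exact hcν _ _
    simp only [List.length_append]
    have hleq : ℓ n = (M.out (pre S n)).length := rfl
    omega
  have hfind : ∀ X : ℕ, ∃ t : ℕ, X < ℓ (t + 1) := by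
    intro X
    obtain ⟨n, hn⟩ := (hinf.eventually_ge_atTop (X + 1)).exists
    refine ⟨n, ?_⟩
    have h1 : ℓ n ≤ ℓ (n + 1) := hℓmono n (n + 1) (by omega)
    have h2 : X + 1 ≤ ℓ n := hn
    omega
  -- block structure of p
  set B := p.length / L with hB
  set lam := p.length % L with hlam
  have hlamL : lam < L := Nat.mod_lt _ hL
  have hplen : lam + B * L = p.length := by
    rw [hlam, hB, Nat.mul_comm]
    exact Nat.mod_add_div _ _
  set cut : ℕ → ℕ := fun j => if j = 0 then 0 else lam + (j - 1) * L with hcutdef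
  have hcut0 : cut 0 = 0 := rfl
  have hcutsucc : ∀ j : ℕ, cut (j + 1) = lam + j * L := by
    intro j
    show (if j + 1 = 0 then 0 else lam + (j + 1 - 1) * L) = _
    simp
  have hcutmono : ∀ j1 j2 : ℕ, j1 ≤ j2 → cut j1 ≤ cut j2 := by
    intro j1 j2 h
    rcases j1 with _ | j1
    · rw [hcut0]; omega
    · rcases j2 with _ | j2
      · omega
      · rw [hcutsucc, hcutsucc]
        have : j1 * L ≤ j2 * L := Nat.mul_le_mul_right _ (by omega)
        omega
  have hcuttop : cut (B + 1) = p.length := by rw [hcutsucc]; omega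
  have hcutle : ∀ j : ℕ, j ≤ B + 1 → cut j ≤ p.length := by
    intro j hj
    calc cut j ≤ cut (B + 1) := hcutmono _ _ hj
    _ = p.length := hcuttop
  -- output lengths of U on prefixes of p
  set msOf : ℕ → ℕ := fun a => (U.out (p.take a)).length with hmsOfdef
  have hUsplit : ∀ a b : ℕ, a ≤ b →
      U.out (p.take b) = U.out (p.take a) ++
        U.outFrom (U.stateFrom U.q0 (p.take a)) ((p.drop a).take (b - a)) := by
    intro a b hab
    rw [take_split p hab]
    exact Raw.out_append U _ _
  have hmsmono : ∀ a b : ℕ, a ≤ b → msOf a ≤ msOf b := by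
    intro a b hab
    show (U.out (p.take a)).length ≤ (U.out (p.take b)).length
    rw [hUsplit a b hab]
    simp
  have hmstop : msOf p.length = m := by
    show (U.out (p.take p.length)).length = m
    rw [List.take_length, hpm, pre_length]
  have hmsm : ∀ a : ℕ, a ≤ p.length → msOf a ≤ m := by
    intro a ha
    rw [← hmstop]
    exact hmsmono a p.length ha
  have hUpre : ∀ a : ℕ, a ≤ p.length → U.out (p.take a) = pre S' (msOf a) := by
    intro a ha
    have hXa : U.out (p.take a) ++ U.outFrom (U.stateFrom U.q0 (p.take a)) (p.drop a)
        = pre S' m := by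
      rw [← Raw.out_append U, List.take_append_drop]
      exact hpm
    have h1 : (pre S' m).take (msOf a) = U.out (p.take a) := by
      rw [← hXa]
      exact List.take_left' rfl
    rw [← h1, pre_take, min_eq_left (hmsm a ha)]
  have hUseg : ∀ a b : ℕ, a ≤ b → b ≤ p.length →
      U.outFrom (U.stateFrom U.q0 (p.take a)) ((p.drop a).take (b - a))
        = seg S' (msOf a) (msOf b) := by
    intro a b hab hb
    have h1 := hUsplit a b hab
    rw [hUpre a (hab.trans hb), hUpre b hb] at h1
    have h2 : pre S' (msOf b) = pre S' (msOf a) ++ seg S' (msOf a) (msOf b) :=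
      (pre_add_seg S' (hmsmono a b hab)).symm
    rw [h2] at h1
    exact (List.append_cancel_left h1).symm
  have hUstate : ∀ a b : ℕ, a ≤ b →
      U.stateFrom U.q0 (p.take b)
        = U.stateFrom (U.stateFrom U.q0 (p.take a)) ((p.drop a).take (b - a)) := by
    intro a b hab
    rw [take_split p hab]
    exact Raw.stateFrom_append U _ _ _
  set mseq : ℕ → ℕ := fun j => msOf (cut j) with hmseqdef
  have hmseq0 : mseq 0 = 0 := by
    show (U.out (p.take (cut 0))).length = 0
    rw [hcut0, List.take_zero]
    rfl
  have hmseqtop : mseq (B + 1) = m := by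
    show msOf (cut (B + 1)) = m
    rw [hcuttop, hmstop]
  have hmseqmono : ∀ j1 j2 : ℕ, j1 ≤ j2 → mseq j1 ≤ mseq j2 :=
    fun j1 j2 h => hmsmono _ _ (hcutmono _ _ h)
  have hmseqm : ∀ j : ℕ, j ≤ B + 1 → mseq j ≤ m := fun j hj => hmsm _ (hcutle j hj)
  -- the checkpoint indices
  set tseq : ℕ → ℕ := fun j => if j = 0 then 0 else Nat.find (hfind (mseq j)) with htseqdef
  have htseq0 : tseq 0 = 0 := rfl
  have hthigh : ∀ j : ℕ, 1 ≤ j → mseq j < ℓ (tseq j + 1) := by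
    intro j hj
    have : tseq j = Nat.find (hfind (mseq j)) := by
      show (if j = 0 then 0 else Nat.find (hfind (mseq j))) = _
      rw [if_neg (by omega)]
    rw [this]
    exact Nat.find_spec (hfind (mseq j))
  have htlow : ∀ j : ℕ, ℓ (tseq j) ≤ mseq j := by
    intro j
    rcases Nat.eq_zero_or_pos j with hj | hj
    · rw [hj, htseq0, hℓ0]
      omega
    · have heq : tseq j = Nat.find (hfind (mseq j)) := by
        show (if j = 0 then 0 else Nat.find (hfind (mseq j))) = _
        rw [if_neg (by omega)]
      rcases Nat.eq_zero_or_pos (tseq j) with h0 | h0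
      · rw [h0, hℓ0]; omega
      · have := Nat.find_min (hfind (mseq j)) (m := tseq j - 1) (by omega)
        push_neg at this
        have heq2 : tseq j - 1 + 1 = tseq j := by omega
        rw [heq2] at this
        exact this
  have htmono : ∀ j1 j2 : ℕ, j1 ≤ j2 → tseq j1 ≤ tseq j2 := by
    intro j1 j2 h
    rcases Nat.eq_zero_or_pos j1 with h1 | h1
    · rw [h1, htseq0]; omega
    · have e1 : tseq j1 = Nat.find (hfind (mseq j1)) := by
        show (if j1 = 0 then 0 else _) = _
        rw [if_neg (by omega)]
      have e2 : tseq j2 = Nat.find (hfind (mseq j2)) := by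
        show (if j2 = 0 then 0 else _) = _
        rw [if_neg (by omega)]
      rw [e1, e2]
      exact Nat.find_mono (fun n hn => lt_of_le_of_lt (hmseqmono j1 j2 h) hn)
  -- the final checkpoint
  have hfindF : ∃ i : ℕ, m ≤ ℓ (tseq B + i) := by
    obtain ⟨n, hn⟩ := (hinf.eventually_ge_atTop m).exists
    exact ⟨n, le_trans hn (hℓmono n (tseq B + n) (by omega))⟩
  set tF : ℕ := tseq B + Nat.find hfindF with htFdef
  have hF1 : m ≤ ℓ tF := Nat.find_spec hfindF
  have hFo : tseq B ≤ tF := Nat.le_add_right _ _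
  have hF2 : ℓ tF < m + c := by
    rcases Nat.eq_zero_or_pos (Nat.find hfindF) with h0 | h0
    · have he : tF = tseq B := by omega
      rw [he]
      have h1 : ℓ (tseq B) ≤ mseq B := htlow B
      have h2 : mseq B ≤ m := hmseqm B (by omega)
      omega
    · have hmin := Nat.find_min hfindF (m := Nat.find hfindF - 1) (by omega)
      push_neg at hmin
      have hstep2 := hℓstep (tseq B + (Nat.find hfindF - 1))
      have heq : tseq B + (Nat.find hfindF - 1) + 1 = tF := by rw [htFdef]; omega
      rw [heq] at hstep2
      omega
  -- unified target indices
  set TT : ℕ → ℕ := fun j => if j = B + 1 then tF else tseq j with hTTdef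
  have hTTle : ∀ j : ℕ, j ≤ B → TT j = tseq j := by
    intro j hj
    show (if j = B + 1 then tF else tseq j) = _
    rw [if_neg (by omega)]
  have hTTtop : TT (B + 1) = tF := by
    show (if B + 1 = B + 1 then tF else _) = _
    rw [if_pos rfl]
  have hTTmono : ∀ j : ℕ, j ≤ B → TT j ≤ TT (j + 1) := by
    intro j hj
    rcases Nat.lt_or_ge j B with h | h
    · rw [hTTle j hj, hTTle (j+1) (by omega)]
      exact htmono _ _ (by omega)
    · have hjB : j = B := by omega
      rw [hTTle j hj, hjB, hTTtop]
      exact hFo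
  have hTTlow : ∀ j : ℕ, j ≤ B → ℓ (TT j) ≤ mseq j := by
    intro j hj
    rw [hTTle j hj]
    exact htlow j
  have hrbound : ∀ j : ℕ, j ≤ B + 1 → mseq j - ℓ (TT j) < c := by
    intro j hj
    rcases Nat.lt_or_ge j (B + 1) with h | h
    · rcases Nat.eq_zero_or_pos j with h0 | h0
      · rw [h0, hmseq0]; omega
      · have h1 := hthigh j h0
        have h2 := hℓstep (tseq j)
        rw [hTTle j (by omega)]
        omega
    · have hj1 : j = B + 1 := by omega
      rw [hj1, hTTtop, hmseqtop]
      omega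
  have hebound : ∀ j : ℕ, j ≤ B + 1 → ℓ (TT j) - mseq j < c := by
    intro j hj
    rcases Nat.lt_or_ge j (B + 1) with h | h
    · have := hTTlow j (by omega)
      omega
    · have hj1 : j = B + 1 := by omega
      rw [hj1, hTTtop, hmseqtop]
      omega
  -- advice, blocks and rounds
  set adv : ℕ → Adv M c := fun j =>
    (M.finalState (pre S (TT j)),
      listBound c hc (seg S' (ℓ (TT j)) (mseq j)),
      listBound c hc (seg S' (mseq j) (ℓ (TT j)))) with hadvdef
  set enc : Adv M c → List Bool := fun a => (hdec a).choose with hencdef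
  have henc1 : ∀ a : Adv M c, (enc a).length = d0 := fun a => (hdec a).choose_spec.1
  have henc2 : ∀ a : Adv M c, dec (enc a) = a := fun a => (hdec a).choose_spec.2
  set blk : ℕ → List Bool :=
    fun j => enc (adv j) ++ (p.drop (cut (j - 1))).take (cut j - cut (j - 1)) with hblkdef
  set rounds : ℕ → List Bool :=
    fun j => ((List.range j).map (fun i => blk (i + 1))).flatten with hroundsdef
  have hrounds0 : rounds 0 = [] := rfl
  have hroundssucc : ∀ j : ℕ, rounds (j + 1) = rounds j ++ blk (j + 1) := by
    intro j
    show ((List.range (j+1)).map (fun i => blk (i + 1))).flatten = _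
    rw [List.range_succ, List.map_append, List.flatten_append]
    simp; rfl
  have hchunklen : ∀ j : ℕ, j ≤ B →
      ((p.drop (cut j)).take (cut (j + 1) - cut j)).length = cut (j + 1) - cut j := by
    intro j hj
    rw [List.length_take, List.length_drop]
    have h1 : cut (j + 1) ≤ p.length := hcutle _ (by omega)
    have h2 : cut j ≤ cut (j + 1) := hcutmono _ _ (by omega)
    omega
  have hblklen : ∀ j : ℕ, j ≤ B → (blk (j + 1)).length = d0 + (cut (j + 1) - cut j) := by
    intro j hj
    show (enc (adv (j+1)) ++ (p.drop (cut (j + 1 - 1))).take (cut (j+1) - cut (j + 1 - 1))).length = _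
    have e1 : j + 1 - 1 = j := by omega
    rw [e1, List.length_append, henc1, hchunklen j hj]
  set Lam : ℕ → Fin (L + 1) := fun j => if j = 0 then ⟨lam, by omega⟩ else lamL L
    with hLamdef
  have hLamval : ∀ j : ℕ, j ≤ B → (Lam j : ℕ) = cut (j + 1) - cut j := by
    intro j hj
    rcases Nat.eq_zero_or_pos j with h0 | h0
    · rw [h0]
      show ((⟨lam, by omega⟩ : Fin (L + 1)) : ℕ) = cut 1 - cut 0
      rw [hcut0, show cut 1 = lam by rw [hcutsucc]; omega]
      rfl
    · have e1 : Lam j = lamL L := by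
        show (if j = 0 then _ else lamL L) = _
        rw [if_neg (by omega)]
      rw [e1]
      obtain ⟨j0, rfl⟩ : ∃ j0, j = j0 + 1 := ⟨j - 1, by omega⟩
      rw [hcutsucc (j0 + 1), hcutsucc j0]
      show L = lam + (j0 + 1) * L - (lam + j0 * L)
      rw [Nat.succ_mul]
      omega
  -- the invariant
  set WW := W M U L c d0 dec hc hd with hWWdef
  set start2 : Wstate M U L c d0 :=
    (U.q0, M.q0, ⟨[], by simpa using hc⟩,
      Sum.inr ((⟨lam, by omega⟩ : Fin (L + 1)), emptyBuf L d0 hd)) with hstart2def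
  have hINV : ∀ j : ℕ, j ≤ B + 1 →
      WW.stateFrom start2 (rounds j)
        = (U.stateFrom U.q0 (p.take (cut j)), M.finalState (pre S (TT j)),
            listBound c hc (seg S' (ℓ (TT j)) (mseq j)),
            Sum.inr (Lam j, emptyBuf L d0 hd))
      ∧ WW.outFrom start2 (rounds j) = pre S (TT j) := by
    intro j
    induction j with
    | zero =>
      intro _
      have hTT0 : TT 0 = 0 := by
        rw [hTTle 0 (Nat.zero_le B), htseq0]
      constructor
      · rw [hrounds0]
        rw [show WW.stateFrom start2 [] = start2 from rfl]
        rw [hcut0, List.take_zero, hTT0, hpre0, hℓ0, hmseq0, seg_self,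
          listBound_eq c hc [] (by simpa using hc)]
        rfl
      · rw [hrounds0]
        rw [show WW.outFrom start2 [] = [] from rfl]
        rw [hTT0, hpre0]
    | succ j ih =>
      intro hj1
      have hjB : j ≤ B := by omega
      have ihh := ih (by omega)
      rw [hroundssucc j]
      rw [Raw.stateFrom_append, Raw.outFrom_append, ihh.1, ihh.2]
      -- apply the round lemma
      have hblen : (emptyBuf L d0 hd).1.length + (blk (j + 1)).length = d0 + (Lam j : ℕ) := by
        rw [hblklen j hjB, hLamval j hjB]
        show ([] : List Bool).length + _ = _
        simp
      have hbpos : 0 < (blk (j + 1)).length := by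
        rw [hblklen j hjB]
        omega
      have hround := W_round M U L c d0 dec hc hd
        (U.stateFrom U.q0 (p.take (cut j))) (M.finalState (pre S (TT j)))
        (listBound c hc (seg S' (ℓ (TT j)) (mseq j))) (Lam j)
        (blk (j + 1)) (emptyBuf L d0 hd) hblen hbpos
      have hnil : (emptyBuf L d0 hd).1 ++ blk (j + 1) = blk (j + 1) := by
        show [] ++ _ = _
        rw [List.nil_append]
      rw [hnil] at hround
      -- decode the advice
      have e1 : j + 1 - 1 = j := by omega
      have hchtake : (blk (j + 1)).take d0 = enc (adv (j + 1)) := by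
        show (enc (adv (j+1)) ++ (p.drop (cut (j + 1 - 1))).take (cut (j+1) - cut (j + 1 - 1))).take d0 = _
        exact List.take_left' (henc1 _)
      have hchdrop : (blk (j + 1)).drop d0
          = (p.drop (cut j)).take (cut (j + 1) - cut j) := by
        show (enc (adv (j+1)) ++ (p.drop (cut (j + 1 - 1))).take (cut (j+1) - cut (j + 1 - 1))).drop d0 = _
        rw [e1]
        exact List.drop_left' (henc1 _)
      rw [hchtake, hchdrop, henc2] at hround
      -- identify components
      have hcutj : cut j ≤ cut (j + 1) := hcutmono _ _ (by omega)
      have hcutj1 : cut (j + 1) ≤ p.length := hcutle _ (by omega)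
      have hUst : U.stateFrom (U.stateFrom U.q0 (p.take (cut j)))
          ((p.drop (cut j)).take (cut (j + 1) - cut j))
          = U.stateFrom U.q0 (p.take (cut (j + 1))) := (hUstate _ _ hcutj).symm
      have hUout : U.outFrom (U.stateFrom U.q0 (p.take (cut j)))
          ((p.drop (cut j)).take (cut (j + 1) - cut j))
          = seg S' (mseq j) (mseq (j + 1)) := hUseg _ _ hcutj hcutj1
      -- the value of pick
      have hr1 : (listBound c hc (seg S' (ℓ (TT j)) (mseq j))).1
          = seg S' (ℓ (TT j)) (mseq j) :=
        listBound_val c hc _ (by rw [seg_length]; exact hrbound j (by omega))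
      have hz : (listBound c hc (seg S' (ℓ (TT j)) (mseq j))).1 ++
            seg S' (mseq j) (mseq (j + 1))
          = seg S' (ℓ (TT j)) (mseq (j + 1)) := by
        rw [hr1]
        exact seg_append S' (hTTlow j hjB) (hmseqmono j (j + 1) (by omega))
      have hpick : pick M c (M.finalState (pre S (TT j)))
          ((listBound c hc (seg S' (ℓ (TT j)) (mseq j))).1 ++
            U.outFrom (U.stateFrom U.q0 (p.take (cut j)))
              ((p.drop (cut j)).take (cut (j + 1) - cut j)))
          (adv (j + 1)) = seg S (TT j) (TT (j + 1)) := by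
        rw [hUout]
        apply pick_eq M c hM (pre S (TT j)) rfl
        · show M.stateFrom (M.finalState (pre S (TT j))) (seg S (TT j) (TT (j + 1)))
            = M.finalState (pre S (TT (j + 1)))
          exact (hstate _ _ (hTTmono j hjB)).symm
        · show M.outFrom (M.finalState (pre S (TT j))) (seg S (TT j) (TT (j + 1))) ++
              (listBound c hc (seg S' (ℓ (TT (j+1))) (mseq (j+1)))).1
            = ((listBound c hc (seg S' (ℓ (TT j)) (mseq j))).1 ++
                seg S' (mseq j) (mseq (j + 1))) ++
              (listBound c hc (seg S' (mseq (j+1)) (ℓ (TT (j+1))))).1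
          rw [hz, hseg _ _ (hTTmono j hjB)]
          rw [listBound_val c hc (seg S' (ℓ (TT (j+1))) (mseq (j+1))) (by
            rw [seg_length]; exact hrbound (j+1) (by omega))]
          rw [listBound_val c hc (seg S' (mseq (j+1)) (ℓ (TT (j+1)))) (by
            rw [seg_length]; exact hebound (j+1) (by omega))]
          have hll : ℓ (TT j) ≤ ℓ (TT (j + 1)) := hℓmono _ _ (hTTmono j hjB)
          have hlm : ℓ (TT j) ≤ mseq j := hTTlow j hjB
          have hmm : mseq j ≤ mseq (j + 1) := hmseqmono j (j + 1) (by omega)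
          rcases Nat.le_total (ℓ (TT (j + 1))) (mseq (j + 1)) with hcase | hcase
          · rw [seg_eq_nil S' hcase, List.append_nil]
            exact seg_append S' hll hcase
          · rw [seg_eq_nil S' hcase, List.append_nil]
            exact (seg_append S' (le_trans hlm hmm) hcase).symm
      constructor
      · rw [hround.1, hUst]
        have hLamj1 : Lam (j + 1) = lamL L := by
          show (if j + 1 = 0 then _ else lamL L) = _
          rw [if_neg (by omega)]
        rw [hLamj1]
      · rw [hround.2, hpick]
        exact pre_add_seg S (hTTmono j hjB)
  -- assemble the full program
  set p' : List Bool := List.replicate lam false ++ true :: rounds (B + 1) with hp'def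
  have hcount := W_count M U L c d0 dec hc hd U.q0 M.q0 ⟨[], by simpa using hc⟩
    lam (⟨0, by omega⟩ : Fin (L + 1)) (by show 0 + lam ≤ L; omega)
  have hgo := W_go M U L c d0 dec hc hd U.q0 M.q0 ⟨[], by simpa using hc⟩
    (⟨0 + lam, by omega⟩ : Fin (L + 1))
  have hout : WW.out p' = pre S tF := by
    show WW.outFrom WW.q0 p' = _
    have hq0 : WW.q0 = (U.q0, M.q0, ⟨[], by simpa using hc⟩,
        Sum.inl (⟨0, by omega⟩ : Fin (L + 1))) := rfl
    rw [hp'def, hq0, Raw.outFrom_append, hcount.2, hcount.1, List.nil_append,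
      Raw.outFrom_cons, hgo.1, hgo.2, List.nil_append]
    have hst : ((U.q0, M.q0, (⟨[], by simpa using hc⟩ : {l : List Bool // l.length < c}),
        Sum.inr ((⟨0 + lam, by omega⟩ : Fin (L + 1)), emptyBuf L d0 hd)) : Wstate M U L c d0)
        = start2 := by
      rw [hstart2def]
      have he0 : (⟨0 + lam, by omega⟩ : Fin (L + 1)) = ⟨lam, by omega⟩ :=
        Fin.ext (Nat.zero_add lam)
      rw [he0]
    rw [hst, (hINV (B + 1) (by omega)).2, hTTtop]
  -- program length
  have hroundlen : ∀ j : ℕ, j ≤ B + 1 → (rounds j).length = j * d0 + cut j := by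
    intro j
    induction j with
    | zero => intro _; rw [hrounds0, hcut0]; simp
    | succ j ih =>
      intro hj
      rw [hroundssucc, List.length_append, ih (by omega), hblklen j (by omega)]
      have := hcutmono j (j + 1) (by omega)
      rw [Nat.succ_mul]
      omega
  have hlen : p'.length ≤ p.length + d0 * (p.length / L + 1) + 2 * L + 1 := by
    rw [hp'def, List.length_append, List.length_replicate, List.length_cons,
      hroundlen (B + 1) (by omega), hcuttop]
    have h1 : (B + 1) * d0 = d0 * (B + 1) := Nat.mul_comm _ _
    have h2 : d0 * (p.length / L + 1) = d0 * (B + 1) := by rw [hB]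
    omega
  exact ⟨p', tF, hout, hlen, hF1, hF2⟩

end SGL
namespace SGL

set_option maxHeartbeats 4000000 in
theorem slow_growth (S S' : ℕ → Bool) (M : FST) (hM : M.IL)
    (hf : M.computes S S') (hdeep : FSDeep S') : FSDeep S := by
  classical
  obtain ⟨α, hα, H⟩ := hdeep
  obtain ⟨hf1, hf2⟩ := hf
  set ℓ : ℕ → ℕ := fun n => (M.out (pre S n)).length with hℓdef
  -- the output-chunk bound c
  set c : ℕ := 1 + Finset.univ.sup (fun qb : Fin M.n × Bool => (M.ν qb.1 qb.2).length)
    with hcdef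
  have hc : 0 < c := by omega
  have hcν : ∀ (q : Fin M.n) (b : Bool), (M.ν q b).length ≤ c := by
    intro q b
    have h1 : (M.ν q b).length ≤
        Finset.univ.sup (fun qb : Fin M.n × Bool => (M.ν qb.1 qb.2).length) := by
      simpa using Finset.le_sup (f := fun qb : Fin M.n × Bool => (M.ν qb.1 qb.2).length)
        (Finset.mem_univ (q, b))
    omega
  -- basic facts about ℓ
  have hℓ0 : ℓ 0 = 0 := by
    show (M.out (pre S 0)).length = 0
    rw [pre_zero]
    rfl
  have hℓmono : ∀ a b : ℕ, a ≤ b → ℓ a ≤ ℓ b := by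
    intro a b hab
    show (M.out (pre S a)).length ≤ (M.out (pre S b)).length
    rw [← pre_add_seg S hab, FST.out_append M]
    simp
  have hℓstep : ∀ n : ℕ, ℓ (n + 1) ≤ ℓ n + c := by
    intro n
    show (M.out (pre S (n+1))).length ≤ _
    rw [pre_succ S n, FST.out_append M]
    have hν : (M.outFrom (M.finalState (pre S n)) [S n]).length ≤ c := by
      show (M.ν (M.finalState (pre S n)) (S n) ++
        M.outFrom (M.δ (M.finalState (pre S n)) (S n)) []).length ≤ c
      have he : M.outFrom (M.δ (M.finalState (pre S n)) (S n)) [] = [] := rfl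
      rw [he, List.append_nil]
      exact hcν _ _
    simp only [List.length_append]
    have hleq : ℓ n = (M.out (pre S n)).length := rfl
    omega
  have hlc : ∀ n : ℕ, ℓ n ≤ c * n := by
    intro n
    induction n with
    | zero => rw [hℓ0]; omega
    | succ n ih =>
      have := hℓstep n
      have h2 : c * (n + 1) = c * n + c := by ring
      omega
  -- the counting lemma: inputs advance states or output length
  have hcnt : ∀ n : ℕ, n + 1 ≤ (ℓ n + 1) * M.n := by
    intro n
    have hinj : Function.Injective (fun i : Fin (n + 1) =>
        ((⟨ℓ i, Nat.lt_succ_of_le (hℓmono i n (by omega))⟩ : Fin (ℓ n + 1)),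
          M.finalState (pre S i))) := by
      intro i j hij
      simp only [Prod.mk.injEq, Fin.mk.injEq] at hij
      have houts : M.out (pre S i) = M.out (pre S j) := by
        rw [hf2 i, hf2 j]
        show pre S' (ℓ i) = pre S' (ℓ j)
        rw [hij.1]
      have := hM (a₁ := pre S i) (a₂ := pre S j) (by
        simp only [Prod.mk.injEq]
        exact ⟨houts, hij.2⟩)
      have hlen := congrArg List.length this
      rw [pre_length, pre_length] at hlen
      exact Fin.ext hlen
    have hcard := Fintype.card_le_of_injective _ hinj
    simpa [Fintype.card_prod] using hcard
  have hMn : 0 < M.n := M.npos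
  -- decoder for the advice alphabet
  obtain ⟨d0, hd0, dec, hdec⟩ := by
    haveI : Nonempty (Adv M c) := Adv.nonempty M c hc
    exact exists_decoder (Adv M c)
  -- the block length L
  set L : ℕ := max 1 (⌈(4 * d0 : ℝ) / α⌉₊) with hLdef
  have hL : 0 < L := lt_of_lt_of_le Nat.one_pos (le_max_left _ _)
  have hdL : (4 * d0 : ℝ) ≤ α * L := by
    have h1 : ((4 * d0 : ℝ) / α) ≤ (⌈(4 * d0 : ℝ) / α⌉₊ : ℝ) := Nat.le_ceil _
    have h2' : (⌈(4 * d0 : ℝ) / α⌉₊ : ℕ) ≤ L := le_max_right _ _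
    have h2 : ((⌈(4 * d0 : ℝ) / α⌉₊ : ℕ) : ℝ) ≤ (L : ℝ) := by exact_mod_cast h2'
    have h3 : (4 * d0 : ℝ) / α ≤ L := le_trans h1 h2
    calc (4 * d0 : ℝ) = ((4 * d0) / α) * α := by field_simp
    _ ≤ L * α := by apply mul_le_mul_of_nonneg_right h3 (le_of_lt hα)
    _ = α * L := by ring
  -- the new depth parameter
  set α' : ℝ := α / (8 * M.n * (c + 1)) with hα'def
  have hα' : 0 < α' := by
    apply div_pos hα
    have h1 : (0 : ℝ) < M.n := by exact_mod_cast hMn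
    have h2 : (0 : ℝ) < c + 1 := by positivity
    positivity
  refine ⟨α', hα', ?_⟩
  intro k
  -- level k₂ : the truncated composition machines
  obtain ⟨k₂, hk₂⟩ := exists_uniform_bound k (fun s => Finset.sup (Finset.range c)
    (fun r => ((Raw.trunc r).comp ((Raw.ofData M.toSigma).comp (Raw.ofData s))).toFST.size))
  set k₂' : ℕ := max k₂ (Raw.id.toFST.size) with hk₂'def
  obtain ⟨k₃, hFreq⟩ := H k₂'
  -- level k' : the inverting machines
  obtain ⟨kW, hkW⟩ := exists_uniform_bound k₃
    (fun s => (W M (Raw.ofData s) L c d0 dec hc hd0).toFST.size)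
  refine ⟨kW, ?_⟩
  -- the threshold m₀
  set m₀ : ℕ := max 1 ⌈(2 * (d0 + 2 * L + 2) : ℝ) / α⌉₊ with hm₀def
  rw [Filter.frequently_atTop]
  intro N
  have hfreq2 := (hFreq.and_eventually (Filter.eventually_ge_atTop (max m₀ (c * N)))).exists
  obtain ⟨m, hgap, hm⟩ := hfreq2
  have hmm₀ : m₀ ≤ m := le_trans (le_max_left _ _) hm
  have hmN : c * N ≤ m := le_trans (le_max_right _ _) hm
  have hm1 : 1 ≤ m := le_trans (le_trans (le_max_left _ _) (le_max_left _ _)) hm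
  -- the identity machine bound
  have hid : Dfs k₂' (pre S' m) ≤ (m : ℕ∞) := by
    have h1 : Raw.id.toFST.out (pre S' m) = pre S' m := by
      rw [Raw.toFST_out, Raw.id_out]
    have h2 := Dfs_le (k := k₂') (x := pre S' m) (p := pre S' m)
      ⟨Raw.id.toFST, le_max_right _ _, h1⟩
    rwa [pre_length] at h2
  -- extract the minimal program for S'↾m at level k₃
  have hne : Dfs k₃ (pre S' m) ≠ ⊤ := by
    intro htop
    have h1 := le_trans hgap hid
    rw [htop, top_add] at h1
    exact absurd h1 (by simp)
  obtain ⟨p, ⟨U, hUsize, hUout⟩, hUlen⟩ := Dfs_spec hne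
  have hplen : p.length + ⌈α * m⌉₊ ≤ m := by
    have h1 := le_trans hgap hid
    rw [hUlen] at h1
    exact_mod_cast h1
  have hpm : p.length ≤ m := by omega
  -- run the inverting machine
  have hUout' : (Raw.ofData U.toSigma).out p = pre S' m := by
    rw [Raw.ofData_out]
    exact hUout
  obtain ⟨p', t, hWout, hWlen, htm1, htm2⟩ := W_main M hM S S' hf2 hf1 c hc hcν
    (Raw.ofData U.toSigma) L d0 hL hd0 dec hdec p m hUout'
  -- upper bound on Dfs kW (pre S t)
  have hWT : Dfs kW (pre S t) ≤ (p'.length : ℕ∞) := by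
    apply Dfs_le
    refine ⟨(W M (Raw.ofData U.toSigma) L c d0 dec hc hd0).toFST, hkW U hUsize, ?_⟩
    rw [Raw.toFST_out]
    exact hWout
  -- t is large
  have htN : N ≤ t := by
    have h1 : m ≤ ℓ t := htm1
    have h2 : ℓ t ≤ c * t := hlc t
    have h3 : c * N ≤ c * t := by omega
    exact Nat.le_of_mul_le_mul_left h3 hc
  refine ⟨t, htN, ?_⟩
  -- the main inequality; trivial if Dfs k (pre S t) = ⊤
  by_cases htop : Dfs k (pre S t) = ⊤
  · rw [htop]
    exact le_top
  obtain ⟨pT, ⟨T, hTsize, hTout⟩, hTlen⟩ := Dfs_spec htop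
  -- the truncated composition machine witnesses Dfs k₂' (pre S' m) ≤ |pT|
  have htm1' : m ≤ ℓ t := htm1
  have htm2' : ℓ t < m + c := htm2
  set r : ℕ := ℓ t - m with hrdef
  have hrc : r < c := by omega
  have hcomp : ((Raw.trunc r).comp ((Raw.ofData M.toSigma).comp
      (Raw.ofData T.toSigma))).toFST.out pT = pre S' m := by
    rw [Raw.toFST_out, Raw.comp_out, Raw.comp_out, Raw.ofData_out, Raw.ofData_out, hTout,
      hf2 t, Raw.trunc_out, pre_length, pre_take]
    have ho : (M.out (pre S t)).length = ℓ t := rfl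
    have htm1' : m ≤ ℓ t := htm1
    have htm2' : ℓ t < m + c := htm2
    have he : min ((M.out (pre S t)).length - r) (M.out (pre S t)).length = m := by
      rw [ho]
      omega
    rw [he]
  have hlow : Dfs k₂' (pre S' m) ≤ (pT.length : ℕ∞) := by
    apply Dfs_le
    refine ⟨_, ?_, hcomp⟩
    have hle : ((Raw.trunc r).comp ((Raw.ofData M.toSigma).comp
        (Raw.ofData T.toSigma))).toFST.size ≤ Finset.sup (Finset.range c)
          (fun r => ((Raw.trunc r).comp ((Raw.ofData M.toSigma).comp
            (Raw.ofData T.toSigma))).toFST.size) := by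
      exact Finset.le_sup (f := fun r => ((Raw.trunc r).comp ((Raw.ofData M.toSigma).comp
        (Raw.ofData T.toSigma))).toFST.size) (Finset.mem_range.mpr hrc)
    exact le_trans hle (le_trans (hk₂ T hTsize) (le_max_left _ _))
  -- numeric work: |p'| + ⌈α' t⌉ ≤ |p| + ⌈α m⌉
  have htbound : t + 1 ≤ (m + c) * M.n := by
    have h1 := hcnt t
    have h2 : ℓ t + 1 ≤ m + c := by omega
    calc t + 1 ≤ (ℓ t + 1) * M.n := h1
    _ ≤ (m + c) * M.n := Nat.mul_le_mul_right _ h2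
  have hrc2 : r < c := hrc
  -- numeric work over the reals
  have hm0r : (2 * ((d0 : ℝ) + 2 * L + 2)) / α ≤ m := by
    have h1' : (⌈(2 * (d0 + 2 * L + 2) : ℝ) / α⌉₊ : ℕ) ≤ m := le_trans (le_max_right 1 _) hmm₀
    have h1 : ((⌈(2 * (d0 + 2 * L + 2) : ℝ) / α⌉₊ : ℕ) : ℝ) ≤ m := by exact_mod_cast h1'
    exact le_trans (Nat.le_ceil _) h1
  have hm0r2 : (2 * ((d0 : ℝ) + 2 * L + 2)) ≤ α * m := by
    have h2 := (div_le_iff₀ hα).mp hm0r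
    linarith
  have hLpos : (0 : ℝ) < L := by exact_mod_cast hL
  have hd0L : (d0 : ℝ) / L ≤ α / 4 := by
    rw [div_le_div_iff₀ hLpos (by norm_num)]
    linarith [hdL]
  have hb1 : ((p.length / L : ℕ) : ℝ) ≤ (m : ℝ) / L := by
    have h1 : ((p.length / L : ℕ) : ℝ) ≤ (p.length : ℝ) / L := Nat.cast_div_le
    have h2 : (p.length : ℝ) ≤ m := by exact_mod_cast hpm
    have h3 : (p.length : ℝ) / L ≤ (m : ℝ) / L := by gcongr
    linarith
  have hb2 : (d0 : ℝ) * (((p.length / L : ℕ) : ℝ) + 1) ≤ α / 4 * m + d0 := by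
    have h1 : (d0 : ℝ) * ((p.length / L : ℕ) : ℝ) ≤ (d0 : ℝ) * ((m : ℝ) / L) := by
      apply mul_le_mul_of_nonneg_left hb1 (by positivity)
    have h2 : (d0 : ℝ) * ((m : ℝ) / L) = ((d0 : ℝ) / L) * m := by ring
    have h3 : ((d0 : ℝ) / L) * m ≤ (α / 4) * m := by
      apply mul_le_mul_of_nonneg_right hd0L (by positivity)
    nlinarith
  -- bound t against m
  have htb2 : t ≤ (c + 1) * m * M.n := by
    have h4 : c ≤ c * m := Nat.le_mul_of_pos_right c (by omega)
    have h5 : (c + 1) * m = c * m + m := by ring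
    have h6 : m + c ≤ (c + 1) * m := by omega
    have h7 : (m + c) * M.n ≤ ((c + 1) * m) * M.n := Nat.mul_le_mul_right _ h6
    have := htbound
    omega
  have hα't : α' * t ≤ α / 8 * m := by
    have h1 : (t : ℝ) ≤ (((c + 1) * m * M.n : ℕ) : ℝ) := by exact_mod_cast htb2
    have h2 : α' * t ≤ α' * (((c + 1) * m * M.n : ℕ) : ℝ) :=
      mul_le_mul_of_nonneg_left h1 (le_of_lt hα')
    have hMnR : (0 : ℝ) < M.n := by exact_mod_cast hMn
    have h3 : α' * (((c + 1) * m * M.n : ℕ) : ℝ) = α / 8 * m := by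
      rw [hα'def]
      push_cast
      field_simp
    linarith
  have hceil : (⌈α' * t⌉₊ : ℝ) < α' * t + 1 := Nat.ceil_lt_add_one (by positivity)
  have hαm0 : (0 : ℝ) ≤ α * m := by positivity
  have hkey : ((d0 * (p.length / L + 1) + 2 * L + 1 + ⌈α' * t⌉₊ : ℕ) : ℝ) ≤ α * m := by
    push_cast
    nlinarith [hb2, hα't, hceil, hm0r2, hαm0]
  have hX : (d0 * (p.length / L + 1) + 2 * L + 1 + ⌈α' * (t : ℝ)⌉₊ : ℕ) ≤ ⌈α * (m : ℝ)⌉₊ := by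
    have h2 := le_trans hkey (Nat.le_ceil (α * m))
    exact_mod_cast h2
  have hnum : p'.length + ⌈α' * (t : ℝ)⌉₊ ≤ p.length + ⌈α * (m : ℝ)⌉₊ := by omega
  -- conclude in ℕ∞
  have hchain : (p.length : ℕ∞) + (⌈α * m⌉₊ : ℕ∞) ≤ (pT.length : ℕ∞) := by
    rw [← hUlen]
    exact le_trans hgap hlow
  have hchain2 : p.length + ⌈α * m⌉₊ ≤ pT.length := by exact_mod_cast hchain
  calc Dfs kW (pre S t) + (⌈α' * t⌉₊ : ℕ∞) ≤ (p'.length : ℕ∞) + (⌈α' * t⌉₊ : ℕ∞) := by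
        exact add_le_add_left hWT _
  _ = ((p'.length + ⌈α' * t⌉₊ : ℕ) : ℕ∞) := by rw [Nat.cast_add]
  _ ≤ ((pT.length : ℕ) : ℕ∞) := by
        apply Nat.cast_le.mpr
        omega
  _ = Dfs k (pre S t) := hTlen.symm

end SGL

/-- Finite-state slow growth law: if `S' = f(S)` for an ILFS computable `f`
(computed by the information lossless FST `M`) and `S'` is finite-state deep,
then `S` is finite-state deep. -/
theorem fs_slow_growth_law (S S' : ℕ → Bool) (M : FST) (hM : M.IL)
    (hf : M.computes S S') (hdeep : FSDeep S') : FSDeep S :=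
  SGL.slow_growth S S' M hM hf hdeep
end

section
/- There exists a finite-state deep sequence, i.e., an infinite binary sequence S and α > 0 such that for every k ∈ ℕ there exists k' ∈ ℕ such that D^FS_k(S↾n) − D^FS_{k'}(S↾n) ≥ αn for infinitely many n. -/
namespace FSD
open Encodable

/-! ### Encoding bounds -/

lemma encode_mem_le {α : Type*} [Encodable α] {a : α} : ∀ {l : List α}, a ∈ l → encode a ≤ encode l
  | b :: l, h => by
    rw [encode_list_cons]
    rcases List.mem_cons.1 h with rfl | h
    · exact (Nat.left_le_pair _ _).trans (Nat.le_succ _)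
    · exact ((encode_mem_le h).trans (Nat.right_le_pair _ _)).trans (Nat.le_succ _)

lemma encode_finPi_apply_le {n} {π : Fin n → Type} [∀ i, Encodable (π i)] (f : ∀ i, π i)
    (i : Fin n) : encode (f i) ≤ encode f := by
  have h1 : encode f =
      encode (((Equiv.vectorEquivFin _ n).symm (fun j => (⟨j, f j⟩ : Σ j, π j))).toList) := rfl
  have h2 : ((Equiv.vectorEquivFin (Σ j, π j) n).symm (fun j => (⟨j, f j⟩ : Σ j, π j))).toList
      = List.ofFn (fun j => (⟨j, f j⟩ : Σ j, π j)) := by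
    simp [Equiv.vectorEquivFin]
  rw [h1, h2]
  calc encode (f i) ≤ encode (⟨i, f i⟩ : Σ j, π j) := by
        rw [encode_sigma_val]; exact Nat.right_le_pair _ _
    _ ≤ _ := encode_mem_le (List.mem_ofFn.2 ⟨i, rfl⟩)

lemma encode_boolArrow_apply_le {β : Type} [Encodable β] (f : Bool → β) (b : Bool) :
    encode (f b) ≤ encode f := by
  have h1 : encode f = encode (f ∘ (fintypeEquivFin (α := Bool)).symm) := rfl
  rw [h1]
  have := encode_finPi_apply_le (π := fun _ => β) (f ∘ (fintypeEquivFin (α := Bool)).symm)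
    (fintypeEquivFin b)
  simpa only [Function.comp_apply, Equiv.symm_apply_apply] using this

lemma nu_length_lt {T : FST} {k : ℕ} (h : T.size ≤ k) (q : Fin T.n) (b : Bool) :
    (T.ν q b).length < 2 ^ k := by
  have h0 : encode T.toSigma < 2 ^ k := Nat.size_le.1 h
  have h1 : encode ((T.δ, T.ν, T.q0) : (Fin T.n → Bool → Fin T.n) ×
      (Fin T.n → Bool → List Bool) × Fin T.n) ≤ encode T.toSigma := by
    rw [show encode T.toSigma = Nat.pair (encode T.n) (encode (T.δ, T.ν, T.q0)) from rfl]
    exact Nat.right_le_pair _ _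
  have h2 : encode ((T.ν, T.q0) : (Fin T.n → Bool → List Bool) × Fin T.n)
      ≤ encode ((T.δ, T.ν, T.q0) : _ × _ × _) := by
    rw [encode_prod_val]; exact Nat.right_le_pair _ _
  have h3 : encode T.ν ≤ encode ((T.ν, T.q0) : _ × _) := by
    rw [encode_prod_val]; exact Nat.left_le_pair _ _
  have h4 : encode (T.ν q) ≤ encode T.ν := encode_finPi_apply_le T.ν q
  have h5 : encode (T.ν q b) ≤ encode (T.ν q) := encode_boolArrow_apply_le (T.ν q) b
  have h6 : (T.ν q b).length ≤ encode (T.ν q b) := Encodable.length_le_encode _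
  omega

lemma n_lt {T : FST} {k : ℕ} (h : T.size ≤ k) : T.n < 2 ^ k := by
  have h0 : encode T.toSigma < 2 ^ k := Nat.size_le.1 h
  have h1 : T.n ≤ encode T.toSigma := by
    rw [show encode T.toSigma = Nat.pair (encode T.n) (encode (T.δ, T.ν, T.q0)) from rfl,
      encode_nat]
    exact Nat.left_le_pair _ _
  omega

lemma toSigma_injective : Function.Injective FST.toSigma := by
  rintro ⟨n, hn, d, v, q, r⟩ ⟨n', hn', d', v', q', r'⟩ h
  obtain ⟨h1, h2⟩ := Sigma.ext_iff.1 h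
  simp only [FST.toSigma] at h1 h2
  subst h1
  simp only [heq_eq_eq, Prod.mk.injEq] at h2
  obtain ⟨rfl, rfl, rfl⟩ := h2
  rfl


/-! ### outFrom lemmas -/

lemma outFrom_append (T : FST) (q : Fin T.n) (s t : List Bool) :
    T.outFrom q (s ++ t) = T.outFrom q s ++ T.outFrom (T.stateFrom q s) t := by
  induction s generalizing q with
  | nil => simp [FST.outFrom, FST.stateFrom]
  | cons a s ih => simp [FST.outFrom, FST.stateFrom, ih (T.δ q a), List.foldl_cons]

lemma out_take_succ (T : FST) (p : List Bool) (a : ℕ) (h : a < p.length) :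
    T.out (p.take (a + 1)) = T.out (p.take a) ++ T.ν (T.finalState (p.take a)) p[a] := by
  rw [List.take_succ]
  have : p[a]?.toList = [p[a]] := by simp [List.getElem?_eq_getElem h]
  rw [this, FST.out, outFrom_append]
  simp [FST.outFrom, FST.finalState, FST.out]

/-- cumulative output length -/
noncomputable def cum (T : FST) (p : List Bool) (a : ℕ) : ℕ := (T.out (p.take a)).length

lemma cum_def (T : FST) (p : List Bool) (a : ℕ) : cum T p a = (T.out (p.take a)).length := rfl

lemma cum_succ_le {T : FST} {k : ℕ} (hk : T.size ≤ k) (p : List Bool) (a : ℕ) :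
    cum T p (a + 1) ≤ cum T p a + (2 ^ k - 1) := by
  rcases lt_or_ge a p.length with h | h
  · rw [cum, cum, out_take_succ T p a h, List.length_append]
    have := nu_length_lt hk (T.finalState (p.take a)) p[a]
    omega
  · rw [cum, cum, List.take_of_length_le h, List.take_of_length_le (by omega)]
    omega

lemma cum_mono (T : FST) (p : List Bool) : Monotone (cum T p) := by
  apply monotone_nat_of_le_succ
  intro a
  rcases lt_or_ge a p.length with h | h
  · rw [cum, cum, out_take_succ T p a h, List.length_append]; omega
  · rw [cum, cum, List.take_of_length_le h, List.take_of_length_le (by omega)]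

lemma cum_zero (T : FST) (p : List Bool) : cum T p 0 = 0 := by simp [cum, FST.out, FST.outFrom]

lemma cum_top (T : FST) (p : List Bool) : cum T p p.length = (T.out p).length := by
  simp [cum]

/-! ### repl -/

def repl : ℕ → List Bool → List Bool
  | 0, _ => []
  | m + 1, r => r ++ repl m r

lemma repl_length (m : ℕ) (r : List Bool) : (repl m r).length = m * r.length := by
  induction m with
  | zero => simp [repl]
  | succ m ih => simp [repl, ih]; ring

lemma repl_drop (r : List Bool) : ∀ (i m : ℕ), i ≤ m →
    (repl m r).drop (i * r.length) = repl (m - i) r := by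
  intro i
  induction i with
  | zero => simp
  | succ i ih =>
    intro m him
    obtain ⟨m', rfl⟩ : ∃ m', m = m' + 1 := ⟨m - 1, by omega⟩
    have : (i + 1) * r.length = r.length + i * r.length := by ring
    rw [this, repl, List.drop_length_add_append, ih m' (by omega)]
    congr 1
    omega

lemma repl_take (r : List Bool) (j : ℕ) : (repl (j + 1) r).take r.length = r := by
  simp [repl]

/-! ### good strings -/

def extract (T : FST) (q : Fin T.n) (s : List Bool) (d L : ℕ) : List Bool :=
  ((T.outFrom q s).drop d).take L

def NN (k : ℕ) : ℕ := 192 * (k + 1)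
def LL (k : ℕ) : ℕ := 3 * k + 2 * NN k + 1

def Good (k : ℕ) (ρ : List Bool) : Prop :=
  ρ.length = LL k ∧ ∀ (T : FST) (q : Fin T.n) (s : List Bool) (d : ℕ),
    T.size ≤ k → s.length ≤ NN k → d < 2 ^ k → extract T q s d (LL k) ≠ ρ

lemma exists_good (k : ℕ) : ∃ ρ : List Bool, Good k ρ := by
  classical
  by_contra hcon
  push_neg at hcon
  have hbad : ∀ f : Fin (LL k) → Bool, ∃ (T : FST) (q : Fin T.n) (s : List Bool) (d : ℕ),
      T.size ≤ k ∧ s.length ≤ NN k ∧ d < 2 ^ k ∧ extract T q s d (LL k) = List.ofFn f := by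
    intro f
    have h := hcon (List.ofFn f)
    rw [Good] at h
    push_neg at h
    obtain ⟨T, q, s, d, hT, hs, hd, he⟩ := h (List.length_ofFn (f := f))
    exact ⟨T, q, s, d, hT, hs, hd, he⟩
  -- build an injection into a small type
  choose T q s d hT hs hd he using hbad
  let Φ : (Fin (LL k) → Bool) →
      Fin (2 ^ k) × Fin (2 ^ k) × (Fin (NN k + 1) × (Fin (NN k) → Bool)) × Fin (2 ^ k) :=
    fun f => (⟨encode (T f).toSigma, Nat.size_le.1 (hT f)⟩,
      ⟨(q f).val, lt_of_lt_of_le (q f).isLt (le_of_lt (n_lt (hT f)))⟩,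
      (⟨(s f).length, by have := hs f; omega⟩, fun i => (s f).getD i false),
      ⟨d f, hd f⟩)
  have extract_congr : ∀ {T T' : FST}, T = T' → ∀ {q : Fin T.n} {q' : Fin T'.n},
      (q : ℕ) = (q' : ℕ) → ∀ (ss : List Bool) (dd L : ℕ),
      extract T q ss dd L = extract T' q' ss dd L := by
    intro T T' hTT
    subst hTT
    intro q q' hq ss dd L
    cases Fin.ext hq
    rfl
  have hinj : Function.Injective Φ := by
    intro f g hfg
    simp only [Φ, Prod.mk.injEq, Fin.mk.injEq] at hfg
    obtain ⟨h1, h2, ⟨h3, h4⟩, h5⟩ := hfg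
    have hTeq : T f = T g := toSigma_injective (encode_injective h1)
    have hseq : s f = s g := by
      apply List.ext_getElem h3
      intro i hi hi'
      have h6 := congrFun h4 ⟨i, by have := hs f; omega⟩
      rwa [List.getD_eq_getElem _ false hi, List.getD_eq_getElem _ false hi'] at h6
    have heq2 : List.ofFn f = List.ofFn g := by
      rw [← he f, ← he g, hseq, h5, extract_congr hTeq h2]
    exact List.ofFn_injective heq2
  have hcard := Fintype.card_le_of_injective Φ hinj
  simp only [Fintype.card_prod, Fintype.card_fun, Fintype.card_fin, Fintype.card_bool] at hcard
  -- 2 ^ LL k ≤ 2^k * (2^k * ((NN k + 1) * 2 ^ NN k * 2^k))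
  rw [LL] at hcard
  have hlt : NN k + 1 < 2 ^ (NN k + 1) := Nat.lt_two_pow_self
  have h2 : 2 ^ (3 * k + 2 * NN k + 1) =
      2 ^ k * (2 ^ k * (2 ^ (NN k + 1) * 2 ^ NN k * 2 ^ k)) := by ring
  rw [h2] at hcard
  have hpos : 0 < 2 ^ k := Nat.two_pow_pos _
  have hc1 := Nat.le_of_mul_le_mul_left hcard hpos
  have hc2 := Nat.le_of_mul_le_mul_left hc1 hpos
  rw [mul_assoc, mul_assoc] at hc2
  have hp2 : 0 < 2 ^ NN k * 2 ^ k := by positivity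
  have hc3 := Nat.le_of_mul_le_mul_right hc2 hp2
  omega

/-! ### the good strings -/

noncomputable def rho (k : ℕ) : List Bool := (exists_good k).choose

lemma rho_good (k : ℕ) : Good k (rho k) := (exists_good k).choose_spec

lemma rho_length (k : ℕ) : (rho k).length = LL k := (rho_good k).1

lemma LL_pos (k : ℕ) : 1 ≤ LL k := by unfold LL; omega

/-! ### the pumping lower bound -/

lemma pump {k : ℕ} {T : FST} (hT : T.size ≤ k) {p w : List Bool} {m : ℕ}
    (hout : T.out p = w ++ repl m (rho k)) : m * NN k ≤ p.length := by
  classical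
  set L := LL k with hLdef
  set ρ := rho k with hρdef
  set W := w.length with hWdef
  have hL1 : 1 ≤ L := LL_pos k
  have hρL : ρ.length = L := rho_length k
  have hcumtop : cum T p p.length = W + m * L := by
    rw [cum_top, hout, List.length_append, repl_length, hρL]
  -- main induction
  have main : ∀ i, i ≤ m → ∃ b, b ≤ p.length ∧ cum T p b ≤ W + i * L ∧ i * NN k ≤ b := by
    intro i
    induction i with
    | zero =>
      intro _
      refine ⟨0, Nat.zero_le _, ?_, by omega⟩
      rw [cum_zero]
      omega
    | succ i ih =>
      intro him
      obtain ⟨b, hble, hbcum, hbge⟩ := ih (by omega)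
      -- the A point
      have hEx : ∃ a, W + (i + 1) * L ≤ cum T p a := by
        refine ⟨p.length, ?_⟩
        rw [hcumtop]
        have : (i + 1) * L ≤ m * L := Nat.mul_le_mul_right _ him
        omega
      set A := Nat.find hEx with hAdef
      have hAspec : W + (i + 1) * L ≤ cum T p A := Nat.find_spec hEx
      have hAle : A ≤ p.length := by
        apply Nat.find_min' hEx
        rw [hcumtop]
        have : (i + 1) * L ≤ m * L := Nat.mul_le_mul_right _ him
        omega
      have hA1 : 1 ≤ A := by
        rcases Nat.eq_zero_or_pos A with h0 | h; swap; · exact h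
        rw [h0, cum_zero] at hAspec
        have : L ≤ (i + 1) * L := Nat.le_mul_of_pos_left _ (by omega)
        omega
      have hAprev : cum T p (A - 1) < W + (i + 1) * L := by
        have := Nat.find_min hEx (show A - 1 < A by omega)
        omega
      -- the B point
      set B := Nat.findGreatest (fun x => cum T p x ≤ W + i * L) p.length with hBdef
      have hBspec : cum T p B ≤ W + i * L :=
        Nat.findGreatest_spec (P := fun x => cum T p x ≤ W + i * L) (Nat.zero_le p.length)
          (by show cum T p 0 ≤ W + i * L; rw [cum_zero]; omega)
      have hBle : B ≤ p.length := Nat.findGreatest_le _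
      have hBA : B < A := by
        by_contra hcon
        have := cum_mono T p (show A ≤ B by omega)
        have : (i + 1) * L = i * L + L := by ring
        omega
      have hBlt : B < p.length := by
        have hiL : i * L < m * L := by
          have : i + 1 ≤ m := him
          calc i * L < i * L + L := by omega
            _ = (i+1) * L := by ring
            _ ≤ m * L := Nat.mul_le_mul_right _ him
        rcases Nat.lt_or_ge B p.length with h | h
        · exact h
        · have hBp : B = p.length := by omega
          rw [hBp, hcumtop] at hBspec; omega
      have hdlt : W + i * L - cum T p B < 2 ^ k := by
        have hgr : ¬ (cum T p (B + 1) ≤ W + i * L) :=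
          Nat.findGreatest_is_greatest (P := fun x => cum T p x ≤ W + i * L)
            (show B < B + 1 by omega) (show B + 1 ≤ p.length by omega)
        have hstep := cum_succ_le hT p B
        have h2k : 1 ≤ 2 ^ k := Nat.one_le_two_pow
        omega
      -- extract = ρ
      set q : Fin T.n := T.finalState (p.take B) with hqdef
      set s : List Bool := (p.take A).drop B with hsdef
      set dd : ℕ := W + i * L - cum T p B with hdddef
      have hsplit : p.take A = p.take B ++ s := by
        rw [hsdef,
          show p.take B = (p.take A).take B by rw [List.take_take, min_eq_left (le_of_lt hBA)]]
        exact (List.take_append_drop B (p.take A)).symm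
      have houtA : T.out (p.take A) = T.out (p.take B) ++ T.outFrom q s := by
        rw [hsplit, FST.out, outFrom_append]
        rfl
      have hcumA : cum T p A = cum T p B + (T.outFrom q s).length := by
        rw [cum, cum, houtA, List.length_append]
      -- (d)
      have hdropρ : ((w ++ repl m ρ).drop (W + i * L)).take L = ρ := by
        rw [hWdef, List.drop_length_add_append, ← hρL, repl_drop ρ i m (by omega)]
        obtain ⟨j, hj⟩ : ∃ j, m - i = j + 1 := ⟨m - i - 1, by omega⟩
        rw [hj, repl_take]
      -- (e)
      have houtp : T.out p = T.out (p.take A) ++ T.outFrom (T.finalState (p.take A)) (p.drop A) := by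
        conv_lhs => rw [← List.take_append_drop A p]
        rw [FST.out, outFrom_append]
        rfl
      have hlenA : W + i * L + L ≤ (T.out (p.take A)).length := by
        have : (i + 1) * L = i * L + L := by ring
        have := hAspec
        rw [cum_def] at this
        omega
      have he1 : ((T.out p).drop (W + i * L)).take L
          = ((T.out (p.take A)).drop (W + i * L)).take L := by
        rw [houtp, List.drop_append,
          List.take_append_of_le_length (by rw [List.length_drop]; omega)]
      have he2 : (T.out (p.take A)).drop (W + i * L) = (T.outFrom q s).drop dd := by
        have hlenB : (T.out (p.take B)).length = cum T p B := (cum_def T p B).symm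
        rw [houtA, List.drop_append,
          List.drop_eq_nil_of_le (by rw [hlenB]; omega : (T.out (p.take B)).length ≤ W + i * L)]
        rw [List.nil_append, hlenB]
      have hextract : extract T q s dd L = ρ := by
        rw [extract, ← he2, ← he1, hout, hdropρ]
      -- apply goodness
      have hslen : NN k < s.length := by
        by_contra hcon
        push_neg at hcon
        exact (rho_good k).2 T q s dd hT hcon hdlt hextract
      have hslen2 : s.length = A - B := by
        rw [hsdef, List.length_drop, List.length_take, min_eq_left hAle]
      have hbB : b ≤ B := Nat.le_findGreatest hble hbcum
      refine ⟨A - 1, by omega, by omega, by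
        have : (i + 1) * NN k = i * NN k + NN k := by ring
        omega⟩
  obtain ⟨b, hble, _, hbge⟩ := main m le_rfl
  omega

/-! ### the decompressor machine -/

def M (ρ : List Bool) : FST where
  n := 3
  npos := by norm_num
  δ := fun q b => match q with
    | 0 => if b then 2 else 1
    | _ => 0
  ν := fun q b => match q with
    | 0 => []
    | 1 => [b]
    | _ => if b then [] else ρ
  q0 := 0
  reach := by
    intro q
    match q with
    | 0 => exact ⟨[], rfl⟩
    | 1 => exact ⟨[false], rfl⟩
    | 2 => exact ⟨[true], rfl⟩

def encP : List Bool → List Bool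
  | [] => []
  | b :: w => false :: b :: encP w

lemma encP_length (w : List Bool) : (encP w).length = 2 * w.length := by
  induction w with
  | nil => rfl
  | cons b w ih => simp [encP, ih]; ring

lemma M_out_copy (ρ : List Bool) (w rest : List Bool) :
    (M ρ).outFrom (M ρ).q0 (encP w ++ rest) = w ++ (M ρ).outFrom (M ρ).q0 rest := by
  induction w with
  | nil => rfl
  | cons b w ih =>
    show (M ρ).outFrom (M ρ).q0 (false :: b :: (encP w ++ rest)) = _
    rw [FST.outFrom, FST.outFrom]
    show [] ++ ([b] ++ (M ρ).outFrom (M ρ).q0 (encP w ++ rest)) = _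
    rw [ih]
    simp

lemma M_out_rep (ρ : List Bool) (m : ℕ) :
    (M ρ).outFrom (M ρ).q0 (repl m [true, false]) = repl m ρ := by
  induction m with
  | zero => rfl
  | succ m ih =>
    show (M ρ).outFrom (M ρ).q0 (true :: false :: repl m [true, false]) = ρ ++ repl m ρ
    rw [FST.outFrom, FST.outFrom]
    show [] ++ (ρ ++ (M ρ).outFrom (M ρ).q0 (repl m [true, false])) = _
    rw [ih]
    simp

lemma M_out (ρ w : List Bool) (m : ℕ) :
    (M ρ).out (encP w ++ repl m [true, false]) = w ++ repl m ρ := by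
  rw [FST.out, M_out_copy, M_out_rep]

/-! ### the sequence -/

noncomputable def Wseq : ℕ → List Bool
  | 0 => []
  | t + 1 => Wseq t ++ repl (64 * ((Wseq t).length + 1)) (rho (Nat.unpair t).1)

noncomputable def Sseq : ℕ → Bool := fun n => (Wseq (n + 1)).getD n false

lemma Wseq_prefix {a b : ℕ} (h : a ≤ b) : (Wseq a) <+: (Wseq b) := by
  induction b with
  | zero => rw [Nat.le_zero.1 h]
  | succ b ih =>
    rcases Nat.lt_or_ge a (b + 1) with h' | h'
    · exact (ih (by omega)).trans ⟨_, rfl⟩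
    · rw [le_antisymm h h']

lemma Wseq_len_succ (t : ℕ) : (Wseq t).length + 1 ≤ (Wseq (t + 1)).length := by
  show (Wseq t).length + 1 ≤ (Wseq t ++ repl (64 * ((Wseq t).length + 1)) (rho (Nat.unpair t).1)).length
  rw [List.length_append, repl_length, rho_length]
  have h1 := LL_pos (Nat.unpair t).1
  nlinarith

lemma Wseq_len_ge (t : ℕ) : t ≤ (Wseq t).length := by
  induction t with
  | zero => exact Nat.zero_le _
  | succ t ih => have := Wseq_len_succ t; omega

lemma Sseq_eq {t n : ℕ} (h : n < (Wseq t).length) :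
    Sseq n = (Wseq t)[n] := by
  have hn1 : n < (Wseq (n + 1)).length := lt_of_lt_of_le (by omega) (Wseq_len_ge (n + 1))
  rw [Sseq, List.getD_eq_getElem _ _ hn1]
  rcases le_total (n + 1) t with h' | h'
  · exact (Wseq_prefix h').getElem hn1
  · exact ((Wseq_prefix h').getElem h).symm

lemma pre_Sseq (t : ℕ) : pre Sseq ((Wseq t).length) = Wseq t := by
  apply List.ext_getElem (by simp [pre])
  intro i h1 h2
  have h3 : i < (Wseq t).length := h2
  simp only [pre, List.getElem_map, List.getElem_range]
  exact Sseq_eq h3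

/-! ### Dfs bounds -/

lemma Dfs_lower {k : ℕ} {x : List Bool} {w : List Bool} {m : ℕ}
    (hx : x = w ++ repl m (rho k)) : (m * NN k : ℕ) ≤ Dfs k x := by
  rw [Dfs]
  refine le_iInf fun p => le_iInf fun hp => ?_
  obtain ⟨T, hT, hout⟩ := hp
  exact Nat.cast_le.2 (pump hT (by rw [hout, hx]))

lemma Dfs_upper {k' : ℕ} {x : List Bool} (ρ w : List Bool) (m : ℕ)
    (hk' : (M ρ).size ≤ k') (hx : x = w ++ repl m ρ) :
    Dfs k' x ≤ (2 * w.length + 2 * m : ℕ) := by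
  rw [Dfs]
  refine iInf_le_of_le (encP w ++ repl m [true, false]) (iInf_le_of_le ⟨M ρ, hk', by
    rw [M_out, hx]⟩ ?_)
  rw [List.length_append, encP_length, repl_length]
  refine le_of_eq ?_
  simp only [List.length_cons, List.length_nil]
  push_cast
  ring

/-! ### main theorem -/

theorem main_thm :
    ∃ S : ℕ → Bool, ∃ α : ℝ, 0 < α ∧ ∀ k : ℕ, ∃ k' : ℕ, ∃ᶠ n in Filter.atTop,
      Dfs k' (pre S n) + (⌈α * n⌉₊ : ℕ∞) ≤ Dfs k (pre S n) := by
  refine ⟨Sseq, 1 / 36865, by norm_num, fun k => ⟨(M (rho k)).size, ?_⟩⟩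
  rw [Filter.frequently_atTop]
  intro N₀
  set t := Nat.pair k N₀ with ht
  set n := (Wseq (t + 1)).length with hn
  refine ⟨n, ?_, ?_⟩
  · have h1 : N₀ ≤ t := Nat.right_le_pair _ _
    have h2 := Wseq_len_ge (t + 1)
    omega
  · set w := (Wseq t).length with hw
    set m := 64 * (w + 1) with hm
    have hunp : (Nat.unpair t).1 = k := by rw [ht, Nat.unpair_pair]
    have hWt1 : Wseq (t + 1) = Wseq t ++ repl m (rho k) := by
      show Wseq t ++ repl (64 * ((Wseq t).length + 1)) (rho (Nat.unpair t).1) = _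
      rw [hunp]
    have hpre : pre Sseq n = Wseq t ++ repl m (rho k) := by
      rw [hn, pre_Sseq, hWt1]
    have hlow : ((m * NN k : ℕ) : ℕ∞) ≤ Dfs k (pre Sseq n) := Dfs_lower hpre
    have hup : Dfs (M (rho k)).size (pre Sseq n) ≤ ((2 * w + 2 * m : ℕ) : ℕ∞) :=
      Dfs_upper (rho k) (Wseq t) m le_rfl hpre
    set G := (w + 1) * (k + 1) with hG
    -- n is small
    have hnval : n = w + m * LL k := by
      rw [hn, hWt1, List.length_append, repl_length, rho_length]
    have hLbound : LL k ≤ 387 * (k + 1) := by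
      rw [LL, NN]; omega
    have hG1 : w + 1 ≤ G := Nat.le_mul_of_pos_right _ (by omega)
    have hnsmall : n ≤ 36865 * G := by
      have h1 : m * LL k ≤ (64 * (w + 1)) * (387 * (k + 1)) := by
        rw [hm]
        exact Nat.mul_le_mul le_rfl hLbound
      have h3 : (64 * (w + 1)) * (387 * (k + 1)) = 24768 * G := by rw [hG]; ring
      omega
    have hceil : (⌈(1 / 36865 : ℝ) * n⌉₊ : ℕ) ≤ G := by
      rw [Nat.ceil_le]
      have h1 : (n : ℝ) ≤ 36865 * G := by exact_mod_cast Nat.cast_le.2 hnsmall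
      push_cast
      linarith
    have hnum : 2 * w + 2 * m + G ≤ m * NN k := by
      have h3 : m * NN k = 12288 * G := by rw [hm, NN, hG]; ring
      omega
    calc Dfs (M (rho k)).size (pre Sseq n) + (⌈(1 / 36865 : ℝ) * n⌉₊ : ℕ∞)
        ≤ ((2 * w + 2 * m : ℕ) : ℕ∞) + ((G : ℕ) : ℕ∞) := by
          exact add_le_add hup (Nat.cast_le.2 hceil)
      _ = ((2 * w + 2 * m + G : ℕ) : ℕ∞) := by push_cast; ring
      _ ≤ ((m * NN k : ℕ) : ℕ∞) := Nat.cast_le.2 hnum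
      _ ≤ Dfs k (pre Sseq n) := hlow

end FSD

/-- There exists a finite-state deep sequence: a sequence `S` and `α > 0` such that for every
`k` there is `k'` with `Dfs k (S↾n) − Dfs k' (S↾n) ≥ α n` for infinitely many `n`. -/
theorem exists_fs_deep_sequence :
    ∃ S : ℕ → Bool, ∃ α : ℝ, 0 < α ∧ ∀ k : ℕ, ∃ k' : ℕ, ∃ᶠ n in Filter.atTop,
      Dfs k' (pre S n) + (⌈α * n⌉₊ : ℕ∞) ≤ Dfs k (pre S n) :=
  FSD.main_thm
end
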